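/- arXiv:2306.08519 — 8 statements merged into one kernel-verified Lean document; each statement's English description precedes it below -/
import Mathlib

section
/- For every 1 ≤ j ≤ I−2 one has Σ_{k=j+1}^{I−2} Γ_k/(I−k) = (1/(I−j)) · Σ_{k=j+1}^{I−2} Y_k, and consequently Y_j = ((I−j+1)/(I−j)) · Γ_j + (1/(I−j)) · Σ_{k=j+1}^{I−2} Y_k. (Summations with upper index strictly less than the lower index are empty and zero-valued.) -/
/-- `Y_j = ((I−j+1)/(I−j))·Γ_j + Σ_{k=j+1}^{I−2} Γ_k/(I−k)`; empty sums are zero. -/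
noncomputable def Yalg (I : ℕ) (Γ : ℕ → ℝ) (j : ℕ) : ℝ :=
  ((I : ℝ) - (j : ℝ) + 1) / ((I : ℝ) - (j : ℝ)) * Γ j
    + ∑ k ∈ Finset.Icc (j + 1) (I - 2), Γ k / ((I : ℝ) - (k : ℝ))

lemma pull_first {f : ℕ → ℝ} {a b : ℕ} (h : a ≤ b) :
    ∑ k ∈ Finset.Icc a b, f k = f a + ∑ k ∈ Finset.Icc (a+1) b, f k := by
  rw [Finset.Icc_add_one_left_eq_Ioc, ← Finset.Icc_erase_left,
    Finset.add_sum_erase _ f (Finset.mem_Icc.mpr ⟨le_refl a, h⟩)]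

lemma stmt2_aux (I : ℕ) (hI : 3 ≤ I) (Γ : ℕ → ℝ) :
    ∀ d j : ℕ, j + d = I - 2 →
      ∑ k ∈ Finset.Icc (j + 1) (I - 2), Yalg I Γ k
        = ((I : ℝ) - (j : ℝ)) * ∑ k ∈ Finset.Icc (j + 1) (I - 2), Γ k / ((I : ℝ) - (k : ℝ)) := by
  intro d
  induction d with
  | zero =>
      intro j hj
      simp at hj
      subst hj
      rw [Finset.Icc_eq_empty (by omega)]
      simp
  | succ d ih =>
      intro j hj
      have hj1 : j + 1 ≤ I - 2 := by omega
      have hIH := ih (j + 1) (by omega)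
      rw [pull_first (f := fun k => Yalg I Γ k) hj1,
          pull_first (f := fun k => Γ k / ((I : ℝ) - (k : ℝ))) hj1]
      rw [hIH]
      simp only [Yalg]
      have hne : (I : ℝ) - ((j : ℝ) + 1) ≠ 0 := by
        have : (j : ℝ) + 1 < I := by
          have : j + 1 < I := by omega
          exact_mod_cast this
        linarith
      push_cast
      field_simp
      ring

/-- for `1 ≤ j ≤ I−2`,
`Σ_{k=j+1}^{I−2} Γ_k/(I−k) = (1/(I−j))·Σ_{k=j+1}^{I−2} Y_k` and consequently
`Y_j = ((I−j+1)/(I−j))·Γ_j + (1/(I−j))·Σ_{k=j+1}^{I−2} Y_k`. -/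
theorem stmt2 (I : ℕ) (hI : 3 ≤ I) (Γ : ℕ → ℝ) :
    ∀ j : ℕ, 1 ≤ j → j ≤ I - 2 →
      (∑ k ∈ Finset.Icc (j + 1) (I - 2), Γ k / ((I : ℝ) - (k : ℝ))
          = 1 / ((I : ℝ) - (j : ℝ)) * ∑ k ∈ Finset.Icc (j + 1) (I - 2), Yalg I Γ k) ∧
      Yalg I Γ j
        = ((I : ℝ) - (j : ℝ) + 1) / ((I : ℝ) - (j : ℝ)) * Γ j
          + 1 / ((I : ℝ) - (j : ℝ)) * ∑ k ∈ Finset.Icc (j + 1) (I - 2), Yalg I Γ k := by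
  intro j hj1 hj2
  have hne : (I : ℝ) - (j : ℝ) ≠ 0 := by
    have : j < I := by omega
    have : (j : ℝ) < I := by exact_mod_cast this
    linarith
  have key := stmt2_aux I hI Γ (I - 2 - j) j (by omega)
  have h1 : ∑ k ∈ Finset.Icc (j + 1) (I - 2), Γ k / ((I : ℝ) - (k : ℝ))
      = 1 / ((I : ℝ) - (j : ℝ)) * ∑ k ∈ Finset.Icc (j + 1) (I - 2), Yalg I Γ k := by
    rw [key]; field_simp
  refine ⟨h1, ?_⟩
  rw [Yalg, h1]
end

section
/- Let λ > 0 and let 1 ≤ j ≤ I−3. If |Y_k| ≤ λ for all j+2 ≤ k ≤ I−2, then |Σ_{k=j+2}^{I−2} Γ_k/(I−k)| ≤ ((I−j−3)/(I−j−1)) · λ, and in particular this quantity is strictly less than λ. -/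
lemma key_tail_bound (I : ℕ) (Γ : ℕ → ℝ) (lam : ℝ) :
    ∀ d m : ℕ, m + d + 2 = I →
      (∀ k : ℕ, m + 1 ≤ k → k ≤ I - 2 → |Yalg I Γ k| ≤ lam) →
      |∑ k ∈ Finset.Icc (m + 1) (I - 2), Γ k / ((I : ℝ) - (k : ℝ))|
        ≤ (d : ℝ) / ((d : ℝ) + 2) * lam := by
  intro d
  induction d with
  | zero =>
    intro m hm _
    have h2 : I - 2 = m := by omega
    rw [h2]
    simp
  | succ d ih =>
    intro m hm hY
    push_cast
    have hI2 : I - 2 = m + d + 1 := by omega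
    have h' : I = m + d + 3 := by omega
    subst h'
    have hIH := ih (m + 1) (by omega) (fun k hk1 hk2 => hY k (by omega) hk2)
    have hYm := hY (m + 1) le_rfl (by omega)
    set S := ∑ k ∈ Finset.Icc (m + 1 + 1) (m + d + 3 - 2), Γ k / (((m + d + 3 : ℕ) : ℝ) - (k : ℝ)) with hS
    have e1 : ((m + d + 3 : ℕ) : ℝ) - ((m + 1 : ℕ) : ℝ) + 1 = (d : ℝ) + 3 := by push_cast; ring
    have e2 : ((m + d + 3 : ℕ) : ℝ) - ((m + 1 : ℕ) : ℝ) = (d : ℝ) + 2 := by push_cast; ring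
    have hYval : Yalg (m + d + 3) Γ (m + 1) = ((d : ℝ) + 3) / ((d : ℝ) + 2) * Γ (m + 1) + S := by
      rw [Yalg, e1, e2]
    have hsplit : ∑ k ∈ Finset.Icc (m + 1) (m + d + 3 - 2), Γ k / (((m + d + 3 : ℕ) : ℝ) - (k : ℝ))
        = Γ (m + 1) / ((d : ℝ) + 2) + S := by
      have hset : Finset.Icc (m + 1) (m + d + 3 - 2)
          = insert (m + 1) (Finset.Icc (m + 1 + 1) (m + d + 3 - 2)) := by
        ext x; simp only [Finset.mem_Icc, Finset.mem_insert]; omega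
      rw [hset, Finset.sum_insert (by simp [Finset.mem_Icc]), e2]
    rw [hsplit]
    have hd2 : (0:ℝ) < (d : ℝ) + 2 := by positivity
    have hd3 : (0:ℝ) < (d : ℝ) + 3 := by positivity
    have hid : Γ (m + 1) / ((d : ℝ) + 2) + S
        = Yalg (m + d + 3) Γ (m + 1) / ((d : ℝ) + 3) + ((d : ℝ) + 2) / ((d : ℝ) + 3) * S := by
      rw [hYval]; field_simp; ring
    rw [hid]
    have h1 : |Yalg (m + d + 3) Γ (m + 1) / ((d : ℝ) + 3)| ≤ lam / ((d : ℝ) + 3) := by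
      rw [abs_div, abs_of_pos hd3]; gcongr
    have h2 : |((d : ℝ) + 2) / ((d : ℝ) + 3) * S|
        ≤ ((d : ℝ) + 2) / ((d : ℝ) + 3) * ((d : ℝ) / ((d : ℝ) + 2) * lam) := by
      rw [abs_mul, abs_of_pos (by positivity)]
      exact mul_le_mul_of_nonneg_left hIH (by positivity)
    calc |Yalg (m + d + 3) Γ (m + 1) / ((d : ℝ) + 3) + ((d : ℝ) + 2) / ((d : ℝ) + 3) * S|
        ≤ _ + _ := abs_add_le _ _
      _ ≤ lam / ((d : ℝ) + 3) + ((d : ℝ) + 2) / ((d : ℝ) + 3) * ((d : ℝ) / ((d : ℝ) + 2) * lam) :=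
          add_le_add h1 h2
      _ = ((d : ℝ) + 1) / ((d : ℝ) + 1 + 2) * lam := by field_simp; ring

/-- for `λ > 0` and `1 ≤ j ≤ I−3`, if `|Y_k| ≤ λ` for all `j+2 ≤ k ≤ I−2`,
then `|Σ_{k=j+2}^{I−2} Γ_k/(I−k)| ≤ ((I−j−3)/(I−j−1))·λ < λ`. -/
theorem stmt3 (I : ℕ) (hI : 3 ≤ I) (Γ : ℕ → ℝ) (lam : ℝ) (hlam : 0 < lam) :
    ∀ j : ℕ, 1 ≤ j → j ≤ I - 3 →
      (∀ k : ℕ, j + 2 ≤ k → k ≤ I - 2 → |Yalg I Γ k| ≤ lam) →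
      |∑ k ∈ Finset.Icc (j + 2) (I - 2), Γ k / ((I : ℝ) - (k : ℝ))|
          ≤ ((I : ℝ) - (j : ℝ) - 3) / ((I : ℝ) - (j : ℝ) - 1) * lam ∧
        |∑ k ∈ Finset.Icc (j + 2) (I - 2), Γ k / ((I : ℝ) - (k : ℝ))| < lam := by
  intro j hj1 hj2 hY
  have hI4 : j + 3 ≤ I := by omega
  set d : ℕ := I - j - 3 with hd
  have hmd : (j + 1) + d + 2 = I := by omega
  have hcast : (I : ℝ) = (j : ℝ) + (d : ℝ) + 3 := by
    have : ((j + d + 3 : ℕ) : ℝ) = (I : ℝ) := by congr 1; omega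
    push_cast at this; linarith
  have hb := key_tail_bound I Γ lam d (j + 1) hmd (fun k hk1 hk2 => hY k (by omega) hk2)
  have heq : ((I : ℝ) - (j : ℝ) - 3) / ((I : ℝ) - (j : ℝ) - 1) * lam
      = (d : ℝ) / ((d : ℝ) + 2) * lam := by rw [hcast]; ring_nf
  have hb' : |∑ k ∈ Finset.Icc (j + 2) (I - 2), Γ k / ((I : ℝ) - (k : ℝ))|
      ≤ ((I : ℝ) - (j : ℝ) - 3) / ((I : ℝ) - (j : ℝ) - 1) * lam := by
    rw [heq]
    convert hb using 3
  refine ⟨hb', lt_of_le_of_lt hb' ?_⟩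
  rw [heq]
  have : (d : ℝ) / ((d : ℝ) + 2) < 1 := by
    rw [div_lt_one (by positivity)]; linarith
  nlinarith
end

section
/- For every 1 ≤ j ≤ I−2 and every 0 ≤ m ≤ I−j−2 one has ((I−j+1)/(I−j)) · A(j) + Σ_{k=j+1}^{j+m} A(k)/(I−k) = a(j) − a_Σ^{≥j+m+1}/(I−j−m). (Summations with upper index strictly less than the lower index are empty and zero-valued.) -/
/-- `a_Σ^{≥j} = Σ_{k=j}^{I} a(k)`. -/
noncomputable def aSig (I : ℕ) (a : ℕ → ℝ) (j : ℕ) : ℝ :=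
  ∑ k ∈ Finset.Icc j I, a k

/-- `A(j) = a(j) − a_Σ^{≥j}/(I−j+1)` for `j ≤ I−1`, and `A(I) = a(I) − a_Σ^{≥I−1}/2`. -/
noncomputable def Acoef (I : ℕ) (a : ℕ → ℝ) (j : ℕ) : ℝ :=
  if j = I then a I - aSig I a (I - 1) / 2
  else a j - aSig I a j / ((I : ℝ) - (j : ℝ) + 1)

lemma step_arith (x b T aj : ℝ) (hx : x ≠ 0) (hx1 : x - 1 ≠ 0) :
    (aj - (b + T) / x) + (b - (b + T) / x) / (x - 1) = aj - T / (x - 1) := by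
  field_simp
  ring

lemma aSig_step (I : ℕ) (a : ℕ → ℝ) (j : ℕ) (h : j ≤ I) :
    aSig I a j = a j + aSig I a (j + 1) := by
  unfold aSig
  rw [Finset.Icc_eq_cons_Ioc h, Finset.sum_cons, ← Finset.Icc_add_one_left_eq_Ioc]

/-- for `1 ≤ j ≤ I−2` and `0 ≤ m ≤ I−j−2`,
`((I−j+1)/(I−j))·A(j) + Σ_{k=j+1}^{j+m} A(k)/(I−k) = a(j) − a_Σ^{≥j+m+1}/(I−j−m)`. -/
theorem stmt5 (I : ℕ) (hI : 3 ≤ I) (a : ℕ → ℝ) :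
    ∀ j m : ℕ, 1 ≤ j → j ≤ I - 2 → m ≤ I - j - 2 →
      ((I : ℝ) - (j : ℝ) + 1) / ((I : ℝ) - (j : ℝ)) * Acoef I a j
          + ∑ k ∈ Finset.Icc (j + 1) (j + m), Acoef I a k / ((I : ℝ) - (k : ℝ))
        = a j - aSig I a (j + m + 1) / ((I : ℝ) - (j : ℝ) - (m : ℝ)) := by
  intro j m hj hjI
  induction m with
  | zero =>
    intro _
    have hne : j ≠ I := by omega
    have hIj : (j : ℝ) + 2 ≤ (I : ℝ) := by exact_mod_cast (by omega : j + 2 ≤ I)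
    have h0 : (I : ℝ) - (j : ℝ) ≠ 0 := by linarith
    have h1 : (I : ℝ) - (j : ℝ) + 1 ≠ 0 := by linarith
    simp only [Acoef, hne, if_false, Nat.add_zero, Nat.cast_zero,
      Finset.Icc_eq_empty (by omega : ¬ j + 1 ≤ j), Finset.sum_empty, add_zero, sub_zero]
    rw [aSig_step I a j (by omega)]
    field_simp
    ring
  | succ m ih =>
    intro hm
    have ih' := ih (by omega)
    have hne : j + m + 1 ≠ I := by omega
    have hIj : (j : ℝ) + (m : ℝ) + 3 ≤ (I : ℝ) := by exact_mod_cast (by omega : j + m + 3 ≤ I)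
    have h0 : (I : ℝ) - (j : ℝ) - (m : ℝ) ≠ 0 := by linarith
    have h1 : (I : ℝ) - (j : ℝ) - (m : ℝ) - 1 ≠ 0 := by linarith
    rw [show j + (m + 1) = (j + m) + 1 by ring,
      Finset.sum_Icc_succ_top (by omega : j + 1 ≤ j + m + 1)]
    rw [← add_assoc, ih']
    simp only [Acoef, hne, if_false]
    rw [aSig_step I a (j + m + 1) (by omega), show j + m + 1 + 1 = j + (m + 1) + 1 by ring]
    push_cast
    linear_combination step_arith ((I : ℝ) - (j : ℝ) - (m : ℝ)) (a (j + m + 1))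
      (aSig I a (j + (m + 1) + 1)) (a j) h0 (by linarith)
end

section
/- The function t ↦ μ(t)/κ(t) is continuous on [0,T]. -/
open MeasureTheory

/-- The largest index `j ≤ I−2` with `τ(j) ≤ t` (and `0` if none). -/
noncomputable def lastIdx (I : ℕ) (τ : ℕ → ℝ) (t : ℝ) : ℕ :=
  (Finset.filter (fun j => τ j ≤ t) (Finset.range (I - 1))).sup id

/-- The candidate equilibrium stock price drift `μ`, defined piecewise:
for `t ∈ [τ(j), τ(j+1))` (with `0 ≤ j ≤ I−2` the largest index with `τ(j) ≤ t`),
`μ(t) = −κ(t)·(γ(t)·a_Σ^{≥j+1}/(I−j) + Σ_{k=1}^{j} γ(τ(k))·A(k)/(I−k))`, and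
for `t ∈ [τ(I−1), T]`,
`μ(t) = −κ(t)·(γ(t)·a_Σ^{≥I−1}/2 + Σ_{k=1}^{I−2} γ(τ(k))·A(k)/(I−k))`. -/
noncomputable def muDrift (κ γ : ℝ → ℝ) (I : ℕ) (a : ℕ → ℝ) (τ : ℕ → ℝ) (t : ℝ) : ℝ :=
  if t < τ (I - 1) then
    -(κ t) * (γ t * aSig I a (lastIdx I τ t + 1) / ((I : ℝ) - (lastIdx I τ t : ℝ))
      + ∑ k ∈ Finset.Icc 1 (lastIdx I τ t), γ (τ k) * Acoef I a k / ((I : ℝ) - (k : ℝ)))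
  else
    -(κ t) * (γ t * aSig I a (I - 1) / 2
      + ∑ k ∈ Finset.Icc 1 (I - 2), γ (τ k) * Acoef I a k / ((I : ℝ) - (k : ℝ)))

noncomputable def gfun (γ : ℝ → ℝ) (I : ℕ) (a : ℕ → ℝ) (τ : ℕ → ℝ) (j : ℕ) (t : ℝ) : ℝ :=
  γ t * aSig I a (j + 1) / ((I : ℝ) - (j : ℝ))
    + ∑ k ∈ Finset.Icc 1 j, γ (τ k) * Acoef I a k / ((I : ℝ) - (k : ℝ))

noncomputable def Efun (γ : ℝ → ℝ) (I : ℕ) (a : ℕ → ℝ) (τ : ℕ → ℝ) (t : ℝ) : ℝ :=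
  if t < τ (I - 1) then gfun γ I a τ (lastIdx I τ t) t
  else γ t * aSig I a (I - 1) / 2
    + ∑ k ∈ Finset.Icc 1 (I - 2), γ (τ k) * Acoef I a k / ((I : ℝ) - (k : ℝ))

lemma aSig_succ (I : ℕ) (a : ℕ → ℝ) (m : ℕ) (hm : m ≤ I) :
    aSig I a m = a m + aSig I a (m + 1) := by
  unfold aSig
  rw [← Finset.insert_Icc_add_one_left_eq_Icc hm, Finset.sum_insert (by simp)]

lemma junction (γ : ℝ → ℝ) (I : ℕ) (a : ℕ → ℝ) (τ : ℕ → ℝ) (j : ℕ)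
    (hj : j + 1 ≤ I - 2) (hI : 3 ≤ I) {t : ℝ} (ht : τ (j + 1) = t) :
    gfun γ I a τ j t = gfun γ I a τ (j + 1) t := by
  have hjI : j + 1 < I := by omega
  have h1 : ((j : ℝ) + 1) < (I : ℝ) := by exact_mod_cast hjI
  have h2 : (I : ℝ) - (j : ℝ) ≠ 0 := by nlinarith
  have h3 : (I : ℝ) - ((j : ℝ) + 1) ≠ 0 := by intro h; nlinarith
  unfold gfun
  rw [← Finset.insert_Icc_right_eq_Icc_add_one (by omega), Finset.sum_insert (by simp)]
  have hA : Acoef I a (j + 1) = a (j + 1) - aSig I a (j + 1) / ((I : ℝ) - ((j : ℝ) + 1) + 1) := by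
    unfold Acoef
    rw [if_neg (by omega)]
    push_cast
    ring_nf
  have hs : aSig I a (j + 1) = a (j + 1) + aSig I a (j + 2) := aSig_succ I a (j + 1) (by omega)
  have h4 : (I : ℝ) - ((j : ℝ) + 1) + 1 ≠ 0 := by intro h; nlinarith
  rw [hA, hs, ht]
  push_cast
  field_simp
  ring

lemma chain (γ : ℝ → ℝ) (I : ℕ) (a : ℕ → ℝ) (τ : ℕ → ℝ) (hI : 3 ≤ I) {t : ℝ}
    (m L : ℕ) (hmL : m ≤ L) (hL : L ≤ I - 2) (hties : ∀ k, m < k → k ≤ L → τ k = t) :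
    gfun γ I a τ m t = gfun γ I a τ L t := by
  induction L, hmL using Nat.le_induction with
  | base => rfl
  | succ n hn ih =>
    have h1 : gfun γ I a τ m t = gfun γ I a τ n t :=
      ih (by omega) (fun k hk1 hk2 => hties k hk1 (by omega))
    rw [h1]
    exact junction γ I a τ n hL hI (hties (n + 1) (by omega) le_rfl)

lemma lastIdx_ge (I : ℕ) (τ : ℕ → ℝ) {t : ℝ} {m : ℕ} (hm : m < I - 1) (h : τ m ≤ t) :
    m ≤ lastIdx I τ t :=
  Finset.le_sup (f := id) (by simp [Finset.mem_filter, Finset.mem_range, hm, h])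

lemma lastIdx_le (I : ℕ) (τ : ℕ → ℝ) (t : ℝ) (hI : 3 ≤ I) : lastIdx I τ t ≤ I - 2 :=
  Finset.sup_le fun k hk => by
    have := (Finset.mem_filter.1 hk).1
    rw [Finset.mem_range] at this
    simp only [id_eq]
    omega

lemma tau_lastIdx_le (I : ℕ) (τ : ℕ → ℝ) {t : ℝ} (hI : 3 ≤ I) (hτ0 : τ 0 = 0) (ht : 0 ≤ t) :
    τ (lastIdx I τ t) ≤ t := by
  have h0 : (0 : ℕ) ∈ Finset.filter (fun j => τ j ≤ t) (Finset.range (I - 1)) := by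
    simp [Finset.mem_filter, Finset.mem_range, hτ0, ht]
    omega
  obtain ⟨i, hi, hsup⟩ := Finset.exists_mem_eq_sup _ ⟨0, h0⟩ id
  rw [lastIdx, hsup]
  exact (Finset.mem_filter.1 hi).2

lemma glast_eq (γ : ℝ → ℝ) (I : ℕ) (a : ℕ → ℝ) (τ : ℕ → ℝ) (hI : 3 ≤ I) (t : ℝ) :
    gfun γ I a τ (I - 2) t = γ t * aSig I a (I - 1) / 2
      + ∑ k ∈ Finset.Icc 1 (I - 2), γ (τ k) * Acoef I a k / ((I : ℝ) - (k : ℝ)) := by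
  unfold gfun
  have h1 : I - 2 + 1 = I - 1 := by omega
  have h2 : ((I - 2 : ℕ) : ℝ) = (I : ℝ) - 2 := by
    rw [Nat.cast_sub (by omega)]; norm_num
  rw [h1, h2]
  norm_num

lemma Efun_eq_gfun (γ : ℝ → ℝ) (I : ℕ) (a : ℕ → ℝ) (τ : ℕ → ℝ) (hI : 3 ≤ I)
    (hτ0 : τ 0 = 0) (hτmono : ∀ j k : ℕ, j ≤ k → k ≤ I → τ j ≤ τ k)
    {t : ℝ} {m : ℕ} (hm : m ≤ I - 2) (ht0 : 0 ≤ t) (h1 : τ m ≤ t) (h2 : t ≤ τ (m + 1)) :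
    Efun γ I a τ t = gfun γ I a τ m t := by
  by_cases hlt : t < τ (I - 1)
  · rw [Efun, if_pos hlt]
    set L := lastIdx I τ t with hL
    have hmL : m ≤ L := lastIdx_ge I τ (by omega) h1
    have hLle : L ≤ I - 2 := lastIdx_le I τ t hI
    have hτL : τ L ≤ t := tau_lastIdx_le I τ hI hτ0 ht0
    refine (chain γ I a τ hI m L hmL hLle fun k hk1 hk2 => ?_).symm
    have ha : τ k ≤ t := le_trans (hτmono k L hk2 (by omega)) hτL
    have hb : t ≤ τ k := le_trans h2 (hτmono (m + 1) k (by omega) (by omega))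
    linarith
  · rw [Efun, if_neg hlt, ← glast_eq γ I a τ hI t]
    refine (chain γ I a τ hI m (I - 2) hm le_rfl ?_).symm
    intro k hk1 hk2
    have ha : τ k ≤ t := le_trans (hτmono k (I - 1) (by omega) (by omega)) (not_lt.1 hlt)
    have hb : t ≤ τ k := le_trans h2 (hτmono (m + 1) k (by omega) (by omega))
    linarith

lemma muDrift_eq (κ γ : ℝ → ℝ) (I : ℕ) (a : ℕ → ℝ) (τ : ℕ → ℝ) (t : ℝ) :
    muDrift κ γ I a τ t = -(κ t) * Efun γ I a τ t := by
  unfold muDrift Efun gfun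
  split <;> rfl

lemma gfun_cont (γ : ℝ → ℝ) (I : ℕ) (a : ℕ → ℝ) (τ : ℕ → ℝ) (j : ℕ) {s : Set ℝ}
    (hγ : ContinuousOn γ s) : ContinuousOn (fun t => gfun γ I a τ j t) s := by
  unfold gfun
  exact ((hγ.mul continuousOn_const).div_const _).add continuousOn_const

lemma cont_union {f : ℝ → ℝ} {s t : Set ℝ} (hs : IsClosed s) (ht : IsClosed t)
    (hfs : ContinuousOn f s) (hft : ContinuousOn f t) : ContinuousOn f (s ∪ t) := by
  intro x hx
  have h1 : ContinuousWithinAt f s x := by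
    by_cases h : x ∈ s
    · exact (hfs x h).mono Set.Subset.rfl
    · exact continuousWithinAt_of_notMem_closure (by rwa [hs.closure_eq])
  have h2 : ContinuousWithinAt f t x := by
    by_cases h : x ∈ t
    · exact (hft x h).mono Set.Subset.rfl
    · exact continuousWithinAt_of_notMem_closure (by rwa [ht.closure_eq])
  exact h1.union h2

/-- the function `t ↦ μ(t)/κ(t)` is continuous on `[0,T]`. -/
theorem stmt7 (T : ℝ) (κ γ : ℝ → ℝ) (hT : 0 < T)
    (hκcont : ContinuousOn κ (Set.Icc 0 T))
    (hκpos : ∀ t ∈ Set.Icc (0 : ℝ) T, 0 < κ t)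
    (hγcont : ContinuousOn γ (Set.Icc 0 T))
    (hγmono : StrictMonoOn γ (Set.Icc 0 T))
    (hγ0 : γ 0 = 0) (hγT : γ T = 1)
    (I : ℕ) (hI : 3 ≤ I) (a : ℕ → ℝ) (τ : ℕ → ℝ)
    (hτ0 : τ 0 = 0) (hτmono : ∀ j k : ℕ, j ≤ k → k ≤ I → τ j ≤ τ k)
    (hτlast : τ (I - 1) = τ I) (hτT : τ (I - 1) < T) :
    ContinuousOn (fun t => muDrift κ γ I a τ t / κ t) (Set.Icc 0 T) := by
  have hτnn : ∀ k, k ≤ I → 0 ≤ τ k := fun k hk => hτ0 ▸ hτmono 0 k (Nat.zero_le k) hk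
  have hτkT : ∀ k, k ≤ I - 1 → τ k ≤ T :=
    fun k hk => le_trans (hτmono k (I - 1) hk (by omega)) hτT.le
  have key : ∀ d, d ≤ I - 1 →
      ContinuousOn (fun t => Efun γ I a τ t) (Set.Icc (τ (I - 1 - d)) T) := by
    intro d
    induction d with
    | zero =>
      intro _
      simp only [Nat.sub_zero]
      have hsub : Set.Icc (τ (I - 1)) T ⊆ Set.Icc 0 T :=
        Set.Icc_subset_Icc (hτnn _ (by omega)) le_rfl
      refine (gfun_cont γ I a τ (I - 2) (hγcont.mono hsub)).congr fun t ht => ?_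
      rw [Efun, if_neg (not_lt.2 ht.1)]
      exact (glast_eq γ I a τ hI t).symm
    | succ d ih =>
      intro hd
      set m := I - 1 - (d + 1) with hm
      have hm1 : m + 1 = I - 1 - d := by omega
      have hmle : m ≤ I - 2 := by omega
      have hIcc : Set.Icc (τ m) T = Set.Icc (τ m) (τ (m + 1)) ∪ Set.Icc (τ (m + 1)) T :=
        (Set.Icc_union_Icc_eq_Icc (hτmono m (m + 1) (by omega) (by omega))
          (hτkT (m + 1) (by omega))).symm
      rw [hIcc]
      apply cont_union isClosed_Icc isClosed_Icc
      · have hsub : Set.Icc (τ m) (τ (m + 1)) ⊆ Set.Icc 0 T :=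
          Set.Icc_subset_Icc (hτnn m (by omega)) (hτkT (m + 1) (by omega))
        refine (gfun_cont γ I a τ m (hγcont.mono hsub)).congr fun t ht => ?_
        exact Efun_eq_gfun γ I a τ hI hτ0 hτmono hmle
          (le_trans (hτnn m (by omega)) ht.1) ht.1 ht.2
      · have h := ih (by omega)
        rwa [← hm1] at h
  have hE := key (I - 1) le_rfl
  have h0 : I - 1 - (I - 1) = 0 := by omega
  rw [h0, hτ0] at hE
  refine hE.neg.congr fun t ht => ?_
  rw [muDrift_eq, neg_mul, neg_div, mul_div_cancel_left₀ _ (hκpos t ht).ne']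
  rfl
end

section
/- Let 2 ≤ j ≤ I−1. If a(j) ≥ a(i) for every 1 ≤ i ≤ j−1 and a(j) − a_Σ^{≥j+1}/(I−j) ≥ 0, then a(j) − a_Σ^{≥j'+1}/(I−j') ≥ 0 for every 1 ≤ j' ≤ j−1. Symmetrically, if a(j) ≤ a(i) for every 1 ≤ i ≤ j−1 and a(j) − a_Σ^{≥j+1}/(I−j) ≤ 0, then a(j) − a_Σ^{≥j'+1}/(I−j') ≤ 0 for every 1 ≤ j' ≤ j−1. -/
lemma stmt8_aux (I : ℕ) (hI : 3 ≤ I) (a : ℕ → ℝ) (j : ℕ) (hj2 : 2 ≤ j) (hjI : j ≤ I - 1)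
    (hmax : ∀ i : ℕ, 1 ≤ i → i ≤ j - 1 → a i ≤ a j)
    (h0 : 0 ≤ a j - aSig I a (j + 1) / ((I : ℝ) - (j : ℝ)))
    (j' : ℕ) (hj'1 : 1 ≤ j') (hj'j : j' ≤ j - 1) :
    0 ≤ a j - aSig I a (j' + 1) / ((I : ℝ) - (j' : ℝ)) := by
  have hjltI : j < I := lt_of_le_of_lt hjI (Nat.sub_lt (by omega) one_pos)
  have hj'lt : j' < j := by omega
  have hIj : (0:ℝ) < (I:ℝ) - j := by
    have : (j:ℝ) < I := by exact_mod_cast hjltI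
    linarith
  have hIj' : (0:ℝ) < (I:ℝ) - j' := by
    have : (j':ℝ) < I := by exact_mod_cast (by omega : j' < I)
    linarith
  rw [sub_nonneg] at h0 ⊢
  rw [div_le_iff₀ hIj'] ; rw [div_le_iff₀ hIj] at h0
  have hsplit : aSig I a (j' + 1) = (∑ k ∈ Finset.Ioc j' j, a k) + aSig I a (j + 1) := by
    unfold aSig
    rw [Finset.Icc_add_one_left_eq_Ioc, Finset.Icc_add_one_left_eq_Ioc]
    exact (Finset.sum_Ioc_consecutive _ (le_of_lt hj'lt) (le_of_lt hjltI)).symm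
  have hsum : (∑ k ∈ Finset.Ioc j' j, a k) ≤ ((j - j' : ℕ) : ℝ) * a j := by
    have := Finset.sum_le_card_nsmul (Finset.Ioc j' j) a (a j) (fun k hk => by
      simp only [Finset.mem_Ioc] at hk
      rcases eq_or_lt_of_le hk.2 with h | h
      · rw [h]
      · exact hmax k (by omega) (by omega))
    simpa [Nat.card_Ioc, nsmul_eq_mul] using this
  have hcast : ((j - j' : ℕ) : ℝ) = (j:ℝ) - j' := by
    rw [Nat.cast_sub (le_of_lt hj'lt)]
  rw [hsplit]
  calc (∑ k ∈ Finset.Ioc j' j, a k) + aSig I a (j + 1)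
      ≤ ((j:ℝ) - j') * a j + ((I:ℝ) - j) * a j := by
        rw [← hcast]; exact add_le_add hsum (by linarith)
    _ = a j * ((I:ℝ) - j') := by ring

/-- for `2 ≤ j ≤ I−1`: if `a(j) ≥ a(i)` for all `1 ≤ i ≤ j−1` and
`a(j) − a_Σ^{≥j+1}/(I−j) ≥ 0`, then `a(j) − a_Σ^{≥j'+1}/(I−j') ≥ 0` for all `1 ≤ j' ≤ j−1`;
symmetrically with all inequalities reversed. -/
theorem stmt8 (I : ℕ) (hI : 3 ≤ I) (a : ℕ → ℝ) :
    ∀ j : ℕ, 2 ≤ j → j ≤ I - 1 →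
      ((∀ i : ℕ, 1 ≤ i → i ≤ j - 1 → a i ≤ a j) →
        0 ≤ a j - aSig I a (j + 1) / ((I : ℝ) - (j : ℝ)) →
        ∀ j' : ℕ, 1 ≤ j' → j' ≤ j - 1 →
          0 ≤ a j - aSig I a (j' + 1) / ((I : ℝ) - (j' : ℝ))) ∧
      ((∀ i : ℕ, 1 ≤ i → i ≤ j - 1 → a j ≤ a i) →
        a j - aSig I a (j + 1) / ((I : ℝ) - (j : ℝ)) ≤ 0 →
        ∀ j' : ℕ, 1 ≤ j' → j' ≤ j - 1 →
          a j - aSig I a (j' + 1) / ((I : ℝ) - (j' : ℝ)) ≤ 0) := by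
  intro j hj2 hjI
  constructor
  · exact stmt8_aux I hI a j hj2 hjI
  · intro hmin h0 j' hj'1 hj'j
    have hneg : aSig I (fun k => -a k) = fun m => -aSig I a m := by
      funext m; unfold aSig; simp
    have := stmt8_aux I hI (fun k => -a k) j hj2 hjI
      (fun i h1 h2 => neg_le_neg (hmin i h1 h2))
      (by rw [hneg]; simp only [neg_div]; linarith) j' hj'1 hj'j
    rw [hneg] at this
    simp only [neg_div] at this
    linarith
end

section
/- For every 1 ≤ j ≤ I and every t ∈ [0,T], one has ∫_t^T κ(u)·( μ(u)/κ(u) + γ(u)·a(j) + θ(j)_{0−} − θ(j)(u) ) du = Y(j)_t. -/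
open MeasureTheory

/-- `Γ(j)_t = A(j)·∫_{max(t,τ(j))}^T κ(u)(γ(u) − γ(τ(j))) du`. -/
noncomputable def GamP (T : ℝ) (κ γ : ℝ → ℝ) (I : ℕ) (a : ℕ → ℝ) (τ : ℕ → ℝ)
    (j : ℕ) (t : ℝ) : ℝ :=
  Acoef I a j * ∫ u in (max t (τ j))..T, κ u * (γ u - γ (τ j))

/-- `Y(j)_t = ((I−j+1)/(I−j))·Γ(j)_t + Σ_{k=j+1}^{I−2} Γ(k)_t/(I−k)` for `1 ≤ j ≤ I−2`,
and `Y(j)_t = Γ(j)_t` for `j ∈ {I−1, I}`. -/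
noncomputable def Yproc (T : ℝ) (κ γ : ℝ → ℝ) (I : ℕ) (a : ℕ → ℝ) (τ : ℕ → ℝ)
    (j : ℕ) (t : ℝ) : ℝ :=
  if j ≤ I - 2 then
    ((I : ℝ) - (j : ℝ) + 1) / ((I : ℝ) - (j : ℝ)) * GamP T κ γ I a τ j t
      + ∑ k ∈ Finset.Icc (j + 1) (I - 2), GamP T κ γ I a τ k t / ((I : ℝ) - (k : ℝ))
  else GamP T κ γ I a τ j t

/-- Agent `(j)`'s candidate optimal trading strategy:
`θ(j)(t) = θ(j)_{0−} + μ(t)/κ(t) + γ(t)·a(j)` for `t ≤ τ(j)`, frozen afterwards. -/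
noncomputable def thetaEq (κ γ : ℝ → ℝ) (I : ℕ) (a : ℕ → ℝ) (τ : ℕ → ℝ)
    (θ0 : ℕ → ℝ) (j : ℕ) (t : ℝ) : ℝ :=
  if t ≤ τ j then θ0 j + muDrift κ γ I a τ t / κ t + γ t * a j
  else θ0 j + muDrift κ γ I a τ (τ j) / κ (τ j) + γ (τ j) * a j


namespace Stmt11Aux

lemma aSig_succ (I : ℕ) (a : ℕ → ℝ) (j : ℕ) (h : j ≤ I) :
    aSig I a j = a j + aSig I a (j + 1) := by
  unfold aSig
  rw [← Finset.add_sum_erase _ a (Finset.mem_Icc.2 ⟨le_rfl, h⟩)]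
  congr 1
  rw [Finset.Icc_erase_left, Finset.Icc_add_one_left_eq_Ioc]

lemma step_id (I : ℕ) (a : ℕ → ℝ) (l : ℕ) (h : l + 1 < I) :
    aSig I a (l + 2) / ((I : ℝ) - (↑(l + 1) : ℝ)) + Acoef I a (l + 1) / ((I : ℝ) - (↑(l + 1) : ℝ))
      = aSig I a (l + 1) / ((I : ℝ) - (l : ℝ)) := by
  have h1 : ((l : ℝ) + 1) < I := by exact_mod_cast h
  have d1 : (I : ℝ) - ((l : ℝ) + 1) ≠ 0 := by intro hc; linarith [sub_eq_zero.1 hc]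
  have d0 : (I : ℝ) - (l : ℝ) ≠ 0 := by intro hc; linarith [sub_eq_zero.1 hc]
  have hA : Acoef I a (l + 1) = a (l + 1) - aSig I a (l + 1) / ((I : ℝ) - (↑(l + 1) : ℝ) + 1) := by
    unfold Acoef; rw [if_neg (by omega)]
  have hS : aSig I a (l + 1) = a (l + 1) + aSig I a (l + 2) := aSig_succ I a (l + 1) (by omega)
  rw [hA, hS]
  push_cast
  have d2 : (I : ℝ) - ((l : ℝ) + 1) + 1 ≠ 0 := by
    have : (I : ℝ) - ((l : ℝ) + 1) + 1 = (I : ℝ) - (l : ℝ) := by ring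
    rw [this]; exact d0
  field_simp
  ring

lemma star (I : ℕ) (a : ℕ → ℝ) (j l : ℕ) (hjl : j ≤ l) :
    l + 1 < I →
    aSig I a (l + 1) / ((I : ℝ) - (l : ℝ))
        + ∑ k ∈ Finset.Icc (j + 1) l, Acoef I a k / ((I : ℝ) - (k : ℝ))
      = aSig I a (j + 1) / ((I : ℝ) - (j : ℝ)) := by
  induction l, hjl using Nat.le_induction with
  | base => intro _; rw [Finset.Icc_eq_empty (by omega), Finset.sum_empty, add_zero]
  | succ l hjl ih =>
    intro hl
    have hl' : l + 1 < I := by omega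
    rw [Finset.sum_Icc_succ_top (by omega : j + 1 ≤ l + 1)]
    have h1 := step_id I a l hl'
    have h2 := ih hl'
    linarith

lemma starstar (I : ℕ) (a : ℕ → ℝ) (j : ℕ) (hj : j < I) :
    ((I : ℝ) - (j : ℝ) + 1) / ((I : ℝ) - (j : ℝ)) * Acoef I a j
      = a j - aSig I a (j + 1) / ((I : ℝ) - (j : ℝ)) := by
  have h1 : (j : ℝ) < I := by exact_mod_cast hj
  have d0 : (I : ℝ) - (j : ℝ) ≠ 0 := by intro hc; linarith [sub_eq_zero.1 hc]
  have d1 : (I : ℝ) - (j : ℝ) + 1 ≠ 0 := by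
    have : (0:ℝ) < (I : ℝ) - (j : ℝ) + 1 := by linarith
    exact this.ne'
  unfold Acoef
  rw [if_neg (by omega), aSig_succ I a j hj.le]
  field_simp
  ring

noncomputable def Mf (γ : ℝ → ℝ) (I : ℕ) (a : ℕ → ℝ) (τ : ℕ → ℝ) (l : ℕ) (x : ℝ) : ℝ :=
  -(x * aSig I a (l + 1) / ((I : ℝ) - (l : ℝ))
    + ∑ k ∈ Finset.Icc 1 l, γ (τ k) * Acoef I a k / ((I : ℝ) - (k : ℝ)))

lemma muDrift_div_lt {κ γ : ℝ → ℝ} {I : ℕ} {a : ℕ → ℝ} {τ : ℕ → ℝ} {u : ℝ}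
    (h : u < τ (I - 1)) (hκ : κ u ≠ 0) :
    muDrift κ γ I a τ u / κ u = Mf γ I a τ (lastIdx I τ u) (γ u) := by
  unfold muDrift Mf
  rw [if_pos h, neg_mul, neg_div, mul_div_cancel_left₀ _ hκ]

lemma muDrift_div_ge {κ γ : ℝ → ℝ} {I : ℕ} {a : ℕ → ℝ} {τ : ℕ → ℝ} {u : ℝ}
    (hI : 3 ≤ I) (h : ¬ u < τ (I - 1)) (hκ : κ u ≠ 0) :
    muDrift κ γ I a τ u / κ u = Mf γ I a τ (I - 2) (γ u) := by
  unfold muDrift Mf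
  rw [if_neg h, neg_mul, neg_div, mul_div_cancel_left₀ _ hκ]
  have h1 : I - 2 + 1 = I - 1 := by omega
  have h2 : ((I - 2 : ℕ) : ℝ) = (I : ℝ) - 2 := by
    rw [Nat.cast_sub (by omega)]; norm_num
  rw [h1, h2]
  have h3 : (I : ℝ) - ((I : ℝ) - 2) = 2 := by ring
  rw [h3]

lemma lastIdx_le (I : ℕ) (τ : ℕ → ℝ) (u : ℝ) : lastIdx I τ u ≤ I - 2 := by
  unfold lastIdx
  refine Finset.sup_le fun b hb => ?_
  have := Finset.mem_range.1 (Finset.mem_filter.1 hb).1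
  simpa using (by omega : b ≤ I - 2)

lemma le_lastIdx {I : ℕ} {τ : ℕ → ℝ} {u : ℝ} {k : ℕ} (hk : k < I - 1) (h : τ k ≤ u) :
    k ≤ lastIdx I τ u :=
  Finset.le_sup (f := id) (Finset.mem_filter.2 ⟨Finset.mem_range.2 hk, h⟩)

lemma τ_lastIdx_le {I : ℕ} {τ : ℕ → ℝ} {u : ℝ} (hI : 2 ≤ I) (hτ0 : τ 0 = 0) (hu : 0 ≤ u) :
    τ (lastIdx I τ u) ≤ u := by
  have h0 : 0 ∈ Finset.filter (fun j => τ j ≤ u) (Finset.range (I - 1)) :=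
    Finset.mem_filter.2 ⟨Finset.mem_range.2 (by omega), by rw [hτ0]; exact hu⟩
  obtain ⟨b, hb, hsup⟩ := Finset.exists_mem_eq_sup _ ⟨0, h0⟩ id
  unfold lastIdx
  rw [hsup]
  exact (Finset.mem_filter.1 hb).2

lemma Mf_telescope (γ : ℝ → ℝ) (I : ℕ) (a : ℕ → ℝ) (τ : ℕ → ℝ) (x : ℝ) (j l : ℕ)
    (hjl : j ≤ l) :
    l + 1 < I → (∀ k, j < k → k ≤ l → γ (τ k) = x) →
    Mf γ I a τ l x = Mf γ I a τ j x := by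
  induction l, hjl using Nat.le_induction with
  | base => intro _ _; rfl
  | succ l hjl ih =>
    intro hl hk
    have hl' : l + 1 < I := by omega
    have key : Mf γ I a τ (l + 1) x = Mf γ I a τ l x := by
      unfold Mf
      rw [Finset.sum_Icc_succ_top (by omega : 1 ≤ l + 1), hk (l + 1) (by omega) le_rfl]
      have hstep := step_id I a l hl'
      linear_combination (-x) * hstep
    rw [key]
    exact ih hl' fun k h1 h2 => hk k h1 (by omega)

lemma main_alg (γ : ℝ → ℝ) (I : ℕ) (a : ℕ → ℝ) (τ : ℕ → ℝ) (u : ℝ) (j l : ℕ)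
    (hjl : j ≤ l) (hl : l + 1 < I)
    (hiff : ∀ k, j + 1 ≤ k → k ≤ I - 2 → (τ k ≤ u ↔ k ≤ l)) :
    Mf γ I a τ l (γ u) - Mf γ I a τ j (γ (τ j)) + (γ u - γ (τ j)) * a j
      = ((I : ℝ) - (j : ℝ) + 1) / ((I : ℝ) - (j : ℝ)) * Acoef I a j * (γ u - γ (τ j))
        + ∑ k ∈ Finset.Icc (j + 1) (I - 2),
            Acoef I a k / ((I : ℝ) - (k : ℝ)) * (if τ k ≤ u then γ u - γ (τ k) else 0) := by
  classical
  have hfil : Finset.filter (fun k => τ k ≤ u) (Finset.Icc (j + 1) (I - 2))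
      = Finset.Icc (j + 1) l := by
    ext k
    simp only [Finset.mem_filter, Finset.mem_Icc]
    constructor
    · rintro ⟨⟨h1, h2⟩, h3⟩; exact ⟨h1, (hiff k h1 h2).1 h3⟩
    · rintro ⟨h1, h2⟩; exact ⟨⟨h1, by omega⟩, (hiff k h1 (by omega)).2 h2⟩
  have hsum : ∑ k ∈ Finset.Icc (j + 1) (I - 2),
        Acoef I a k / ((I : ℝ) - (k : ℝ)) * (if τ k ≤ u then γ u - γ (τ k) else 0)
      = ∑ k ∈ Finset.Icc (j + 1) l, Acoef I a k / ((I : ℝ) - (k : ℝ)) * (γ u - γ (τ k)) := by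
    rw [← hfil, Finset.sum_filter]
    exact Finset.sum_congr rfl fun k _ => by split_ifs <;> simp
  rw [hsum]
  have hsplit : ∑ k ∈ Finset.Icc 1 l, γ (τ k) * Acoef I a k / ((I : ℝ) - (k : ℝ))
      = ∑ k ∈ Finset.Icc 1 j, γ (τ k) * Acoef I a k / ((I : ℝ) - (k : ℝ))
        + ∑ k ∈ Finset.Icc (j + 1) l, γ (τ k) * Acoef I a k / ((I : ℝ) - (k : ℝ)) := by
    rw [show Finset.Icc 1 l = Finset.Ioc 0 l from Finset.Icc_add_one_left_eq_Ioc 0 l,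
        show Finset.Icc 1 j = Finset.Ioc 0 j from Finset.Icc_add_one_left_eq_Ioc 0 j,
        show Finset.Icc (j + 1) l = Finset.Ioc j l from Finset.Icc_add_one_left_eq_Ioc j l,
        Finset.sum_Ioc_consecutive _ (Nat.zero_le j) hjl]
  have hstar := star I a j l hjl hl
  have hss := starstar I a j (by omega)
  have hexp : ∑ k ∈ Finset.Icc (j + 1) l, Acoef I a k / ((I : ℝ) - (k : ℝ)) * (γ u - γ (τ k))
      = γ u * (∑ k ∈ Finset.Icc (j + 1) l, Acoef I a k / ((I : ℝ) - (k : ℝ)))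
        - ∑ k ∈ Finset.Icc (j + 1) l, γ (τ k) * Acoef I a k / ((I : ℝ) - (k : ℝ)) := by
    rw [Finset.mul_sum, ← Finset.sum_sub_distrib]
    exact Finset.sum_congr rfl fun k _ => by ring
  unfold Mf
  rw [hsplit, hexp]
  linear_combination (γ (τ j) - γ u) * hss + (- γ u) * hstar

end Stmt11Aux

/-- for every `1 ≤ j ≤ I` and `t ∈ [0,T]`,
`∫_t^T κ(u)·(μ(u)/κ(u) + γ(u)·a(j) + θ(j)_{0−} − θ(j)(u)) du = Y(j)_t`. -/
theorem stmt11 (T : ℝ) (κ γ : ℝ → ℝ) (hT : 0 < T)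
    (hκcont : ContinuousOn κ (Set.Icc 0 T))
    (hκpos : ∀ t ∈ Set.Icc (0 : ℝ) T, 0 < κ t)
    (hγcont : ContinuousOn γ (Set.Icc 0 T))
    (hγmono : StrictMonoOn γ (Set.Icc 0 T))
    (hγ0 : γ 0 = 0) (hγT : γ T = 1)
    (I : ℕ) (hI : 3 ≤ I) (a : ℕ → ℝ) (τ : ℕ → ℝ)
    (hτ0 : τ 0 = 0) (hτmono : ∀ j k : ℕ, j ≤ k → k ≤ I → τ j ≤ τ k)
    (hτlast : τ (I - 1) = τ I) (hτT : τ (I - 1) < T)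
    (θ0 : ℕ → ℝ) :
    ∀ j : ℕ, 1 ≤ j → j ≤ I → ∀ t ∈ Set.Icc (0 : ℝ) T,
      (∫ u in t..T, κ u * (muDrift κ γ I a τ u / κ u + γ u * a j + θ0 j
          - thetaEq κ γ I a τ θ0 j u))
        = Yproc T κ γ I a τ j t := by
  classical
  intro j hj1 hjI t ht
  obtain ⟨ht0, htT⟩ := ht
  have hκne : ∀ u ∈ Set.Icc (0:ℝ) T, κ u ≠ 0 := fun u hu => (hκpos u hu).ne'
  have hτk0 : ∀ k, k ≤ I → 0 ≤ τ k := fun k hk => by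
    rw [← hτ0]; exact hτmono 0 k (Nat.zero_le k) hk
  have hτkT : ∀ k, k ≤ I - 1 → τ k ≤ T := fun k hk =>
    (hτmono k (I-1) hk (by omega)).trans hτT.le
  have hτj0 : 0 ≤ τ j := hτk0 j hjI
  have hτjI : τ j ≤ τ (I-1) := by
    have h := hτmono j I hjI le_rfl
    rw [← hτlast] at h; exact h
  have hτjT : τ j ≤ T := hτjI.trans hτT.le
  set s := max t (τ j) with hs
  have hts : t ≤ s := le_max_left _ _
  have hs0 : (0:ℝ) ≤ s := le_trans ht0 hts
  have hsT : s ≤ T := max_le htT hτjT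
  have hτjs : τ j ≤ s := le_max_right _ _
  have hsmem : s ∈ Set.Icc (0:ℝ) T := ⟨hs0, hsT⟩
  have hTmem : T ∈ Set.Icc (0:ℝ) T := ⟨hT.le, le_rfl⟩
  set C : ℝ := if j ≤ I - 2 then ((I:ℝ) - (j:ℝ) + 1) / ((I:ℝ) - (j:ℝ)) * Acoef I a j
    else Acoef I a j with hC
  set N : ℝ → ℝ := fun u => C * (κ u * (γ u - γ (τ j)))
    + ∑ k ∈ Finset.Icc (j+1) (I-2),
        Acoef I a k / ((I:ℝ) - (k:ℝ)) * (if τ k ≤ u then κ u * (γ u - γ (τ k)) else 0)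
    with hNdef
  -- pointwise identity on [τ j, T]
  have hPW : ∀ u, τ j ≤ u → u ≤ T →
      κ u * (muDrift κ γ I a τ u / κ u + γ u * a j + θ0 j - thetaEq κ γ I a τ θ0 j u)
        = N u := by
    intro u hu1 hu2
    have hu0 : (0:ℝ) ≤ u := hτj0.trans hu1
    have hκu : κ u ≠ 0 := hκne u ⟨hu0, hu2⟩
    have hκτ : κ (τ j) ≠ 0 := hκne _ ⟨hτj0, hτjT⟩
    simp only [hNdef]
    by_cases hcase : u ≤ τ j
    · have hequ : u = τ j := le_antisymm hcase hu1
      have hθeq : thetaEq κ γ I a τ θ0 j u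
          = θ0 j + muDrift κ γ I a τ u / κ u + γ u * a j := by
        unfold thetaEq; rw [if_pos hcase]
      rw [hθeq]
      have hz : ∀ k ∈ Finset.Icc (j+1) (I-2),
          Acoef I a k / ((I:ℝ) - (k:ℝ)) * (if τ k ≤ u then κ u * (γ u - γ (τ k)) else 0)
            = 0 := by
        intro k hk
        obtain ⟨hk1, hk2⟩ := Finset.mem_Icc.1 hk
        split_ifs with h
        · have hjk : τ j ≤ τ k := hτmono j k (by omega) (by omega)
          have hτk : τ k = τ j := le_antisymm (hequ ▸ h) hjk
          rw [hequ, hτk]; ring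
        · ring
      rw [Finset.sum_eq_zero hz, hequ]
      ring
    · push_neg at hcase
      have hθeq : thetaEq κ γ I a τ θ0 j u
          = θ0 j + muDrift κ γ I a τ (τ j) / κ (τ j) + γ (τ j) * a j := by
        unfold thetaEq; rw [if_neg (not_le.2 hcase)]
      rw [hθeq]
      by_cases hjc : j + 1 < I
      · -- case 1 ≤ j ≤ I − 2
        have hCj : C = ((I:ℝ) - (j:ℝ) + 1) / ((I:ℝ) - (j:ℝ)) * Acoef I a j := by
          rw [hC, if_pos (by omega)]
        obtain ⟨l, hjl, hl1, hmu, hiff⟩ :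
            ∃ l, j ≤ l ∧ l + 1 < I ∧
              muDrift κ γ I a τ u / κ u = Stmt11Aux.Mf γ I a τ l (γ u) ∧
              ∀ k, j + 1 ≤ k → k ≤ I - 2 → (τ k ≤ u ↔ k ≤ l) := by
          by_cases hlt : u < τ (I - 1)
          · refine ⟨lastIdx I τ u, Stmt11Aux.le_lastIdx (by omega) hu1, ?_,
              Stmt11Aux.muDrift_div_lt hlt hκu, ?_⟩
            · have := Stmt11Aux.lastIdx_le I τ u; omega
            · intro k hk1 hk2
              constructor
              · intro h; exact Stmt11Aux.le_lastIdx (by omega) h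
              · intro h
                exact le_trans
                  (hτmono k (lastIdx I τ u) h
                    (by have := Stmt11Aux.lastIdx_le I τ u; omega))
                  (Stmt11Aux.τ_lastIdx_le (by omega) hτ0 hu0)
          · refine ⟨I - 2, by omega, by omega, Stmt11Aux.muDrift_div_ge hI hlt hκu, ?_⟩
            intro k hk1 hk2
            constructor
            · intro _; exact hk2
            · intro _
              exact le_trans (hτmono k (I-1) (by omega) (by omega)) (not_lt.1 hlt)
        have hmτ : muDrift κ γ I a τ (τ j) / κ (τ j)
            = Stmt11Aux.Mf γ I a τ j (γ (τ j)) := by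
          by_cases hlt : τ j < τ (I - 1)
          · rw [Stmt11Aux.muDrift_div_lt hlt hκτ]
            have hjl0 : j ≤ lastIdx I τ (τ j) := Stmt11Aux.le_lastIdx (by omega) le_rfl
            have hle0 : lastIdx I τ (τ j) ≤ I - 2 := Stmt11Aux.lastIdx_le I τ (τ j)
            refine Stmt11Aux.Mf_telescope γ I a τ _ j _ hjl0 (by omega) fun k h1 h2 => ?_
            have h3 : τ k ≤ τ j :=
              le_trans (hτmono k _ h2 (by omega))
                (Stmt11Aux.τ_lastIdx_le (by omega) hτ0 hτj0)
            have h4 : τ j ≤ τ k := hτmono j k (by omega) (by omega)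
            rw [le_antisymm h3 h4]
          · rw [Stmt11Aux.muDrift_div_ge hI hlt hκτ]
            have hτeq : τ j = τ (I-1) := le_antisymm hτjI (not_lt.1 hlt)
            refine Stmt11Aux.Mf_telescope γ I a τ _ j _ (by omega) (by omega)
              fun k h1 h2 => ?_
            have h3 : τ k ≤ τ (I-1) := hτmono k (I-1) (by omega) (by omega)
            have h4 : τ j ≤ τ k := hτmono j k (by omega) (by omega)
            rw [le_antisymm (hτeq ▸ h3) h4]
        rw [hmu, hmτ, hCj]
        have hsum2 : ∑ k ∈ Finset.Icc (j+1) (I-2),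
            Acoef I a k / ((I:ℝ) - (k:ℝ)) * (if τ k ≤ u then κ u * (γ u - γ (τ k)) else 0)
            = κ u * ∑ k ∈ Finset.Icc (j+1) (I-2),
                Acoef I a k / ((I:ℝ) - (k:ℝ)) * (if τ k ≤ u then γ u - γ (τ k) else 0) := by
          rw [Finset.mul_sum]
          exact Finset.sum_congr rfl fun k _ => by split_ifs <;> ring
        rw [hsum2]
        have halg := Stmt11Aux.main_alg γ I a τ u j l hjl hl1 hiff
        linear_combination (κ u) * halg
      · -- case j ∈ {I−1, I}
        have hτeq : τ j = τ (I - 1) := by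
          rcases (by omega : j = I - 1 ∨ j = I) with h | h
          · rw [h]
          · rw [h, ← hτlast]
        have hemp : Finset.Icc (j+1) (I-2) = (∅ : Finset ℕ) := Finset.Icc_eq_empty (by omega)
        have hCj : C = Acoef I a j := by rw [hC, if_neg (by omega)]
        have hmu : muDrift κ γ I a τ u / κ u = Stmt11Aux.Mf γ I a τ (I-2) (γ u) :=
          Stmt11Aux.muDrift_div_ge hI (not_lt.2 (by rw [← hτeq]; exact hcase.le)) hκu
        have hmτ : muDrift κ γ I a τ (τ j) / κ (τ j)
            = Stmt11Aux.Mf γ I a τ (I-2) (γ (τ j)) :=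
          Stmt11Aux.muDrift_div_ge hI (not_lt.2 (by rw [← hτeq])) hκτ
        have hA : Acoef I a j = a j - aSig I a (I - 1) / 2 := by
          rcases (by omega : j = I - 1 ∨ j = I) with h | h
          · subst h
            unfold Acoef
            rw [if_neg (by omega)]
            have hc1 : ((I - 1 : ℕ) : ℝ) = (I:ℝ) - 1 := by
              rw [Nat.cast_sub (by omega)]; norm_num
            rw [hc1]
            have hc2 : (I:ℝ) - ((I:ℝ) - 1) + 1 = 2 := by ring
            rw [hc2]
          · subst h
            unfold Acoef
            rw [if_pos rfl]
        rw [hmu, hmτ, hCj, hA, hemp, Finset.sum_empty]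
        unfold Stmt11Aux.Mf
        have h1 : I - 2 + 1 = I - 1 := by omega
        have h2 : ((I - 2 : ℕ) : ℝ) = (I : ℝ) - 2 := by
          rw [Nat.cast_sub (by omega)]; norm_num
        rw [h1, h2]
        have h3 : (I : ℝ) - ((I : ℝ) - 2) = 2 := by ring
        rw [h3]
        ring
  -- basic integrability
  have hInt : ∀ (c x y : ℝ), x ∈ Set.Icc (0:ℝ) T → y ∈ Set.Icc (0:ℝ) T →
      IntervalIntegrable (fun u => κ u * (γ u - c)) volume x y := by
    intro c x y hx hy
    apply ContinuousOn.intervalIntegrable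
    exact (hκcont.mul (hγcont.sub continuousOn_const)).mono (Set.uIcc_subset_Icc hx hy)
  have hIntInd : ∀ (c r x y : ℝ), x ∈ Set.Icc (0:ℝ) T → y ∈ Set.Icc (0:ℝ) T → x ≤ y →
      IntervalIntegrable (fun u => if r ≤ u then κ u * (γ u - c) else 0) volume x y := by
    intro c r x y hx hy hxy
    have heq : (fun u => if r ≤ u then κ u * (γ u - c) else 0)
        = Set.indicator (Set.Ici r) (fun u => κ u * (γ u - c)) := by
      funext u; rw [Set.indicator_apply]; simp [Set.mem_Ici]
    rw [heq, intervalIntegrable_iff_integrableOn_Ioc_of_le hxy]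
    have hb := hInt c x y hx hy
    rw [intervalIntegrable_iff_integrableOn_Ioc_of_le hxy] at hb
    exact MeasureTheory.Integrable.indicator hb measurableSet_Ici
  have hmemτk : ∀ k ∈ Finset.Icc (j+1) (I-2), τ k ∈ Set.Icc (0:ℝ) T := by
    intro k hk
    obtain ⟨hk1, hk2⟩ := Finset.mem_Icc.1 hk
    exact ⟨hτk0 k (by omega), hτkT k (by omega)⟩
  have hIntEach : ∀ k ∈ Finset.Icc (j+1) (I-2), IntervalIntegrable
      (fun u => Acoef I a k / ((I:ℝ) - (k:ℝ)) *
        (if τ k ≤ u then κ u * (γ u - γ (τ k)) else 0)) volume s T :=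
    fun k hk => (hIntInd (γ (τ k)) (τ k) s T hsmem hTmem hsT).const_mul _
  have hIntSum : IntervalIntegrable (fun u => ∑ k ∈ Finset.Icc (j+1) (I-2),
      Acoef I a k / ((I:ℝ) - (k:ℝ)) *
        (if τ k ≤ u then κ u * (γ u - γ (τ k)) else 0)) volume s T := by
    have h := IntervalIntegrable.sum (Finset.Icc (j+1) (I-2)) hIntEach
    have heq : (∑ k ∈ Finset.Icc (j+1) (I-2), fun u => Acoef I a k / ((I:ℝ) - (k:ℝ)) *
        (if τ k ≤ u then κ u * (γ u - γ (τ k)) else 0))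
        = fun u => ∑ k ∈ Finset.Icc (j+1) (I-2), Acoef I a k / ((I:ℝ) - (k:ℝ)) *
          (if τ k ≤ u then κ u * (γ u - γ (τ k)) else 0) := by
      funext u; simp only [Finset.sum_apply]
    rwa [heq] at h
  have hIntC : IntervalIntegrable (fun u => C * (κ u * (γ u - γ (τ j)))) volume s T :=
    (hInt (γ (τ j)) s T hsmem hTmem).const_mul C
  have hIntN : IntervalIntegrable N volume s T := by
    rw [hNdef]
    exact hIntC.add hIntSum
  -- value of ∫ N
  have hIN : (∫ u in s..T, N u) = Yproc T κ γ I a τ j t := by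
    have h1 : (∫ u in s..T, N u)
        = C * (∫ u in s..T, κ u * (γ u - γ (τ j)))
          + ∑ k ∈ Finset.Icc (j+1) (I-2),
              Acoef I a k / ((I:ℝ) - (k:ℝ)) *
                (∫ u in s..T, (if τ k ≤ u then κ u * (γ u - γ (τ k)) else 0)) := by
      simp only [hNdef]
      rw [intervalIntegral.integral_add hIntC hIntSum,
        intervalIntegral.integral_const_mul,
        intervalIntegral.integral_finset_sum hIntEach]
      congr 1
      exact Finset.sum_congr rfl fun k hk => intervalIntegral.integral_const_mul _ _
    have hone : ∀ k ∈ Finset.Icc (j+1) (I-2),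
        (∫ u in s..T, (if τ k ≤ u then κ u * (γ u - γ (τ k)) else 0))
          = ∫ u in (max t (τ k))..T, κ u * (γ u - γ (τ k)) := by
      intro k hk
      obtain ⟨hk1, hk2⟩ := Finset.mem_Icc.1 hk
      have hτkmem : τ k ∈ Set.Icc (0:ℝ) T := hmemτk k hk
      have hjk : τ j ≤ τ k := hτmono j k (by omega) (by omega)
      have hmax : max s (τ k) = max t (τ k) := by
        rw [hs, max_assoc, max_eq_right hjk]
      have hm0 : max s (τ k) ∈ Set.Icc (0:ℝ) T :=
        ⟨le_trans hs0 (le_max_left _ _), max_le hsT hτkmem.2⟩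
      have hsm : s ≤ max s (τ k) := le_max_left _ _
      have hmT : max s (τ k) ≤ T := hm0.2
      rw [← hmax]
      rw [← intervalIntegral.integral_add_adjacent_intervals
          (hIntInd (γ (τ k)) (τ k) s (max s (τ k)) hsmem hm0 hsm)
          (hIntInd (γ (τ k)) (τ k) (max s (τ k)) T hm0 hTmem hmT)]
      have hfirst : (∫ u in s..(max s (τ k)),
          (if τ k ≤ u then κ u * (γ u - γ (τ k)) else 0)) = 0 := by
        by_cases hc : τ k ≤ s
        · rw [max_eq_left hc, intervalIntegral.integral_same]
        · push_neg at hc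
          rw [max_eq_right hc.le]
          rw [intervalIntegral.integral_congr (g := fun _ => (0:ℝ)) ?_]
          · simp
          · intro u hu
            rw [Set.uIcc_of_le hc.le] at hu
            by_cases h : τ k ≤ u
            · have heq : u = τ k := le_antisymm hu.2 h
              simp [if_pos h, heq]
            · simp [if_neg h]
      have hsecond : (∫ u in (max s (τ k))..T,
          (if τ k ≤ u then κ u * (γ u - γ (τ k)) else 0))
            = ∫ u in (max s (τ k))..T, κ u * (γ u - γ (τ k)) := by
        apply intervalIntegral.integral_congr
        intro u hu
        rw [Set.uIcc_of_le hmT] at hu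
        have hki : τ k ≤ u := le_trans (le_max_right s (τ k)) hu.1
        simp only [if_pos hki]
      rw [hfirst, hsecond, zero_add]
    have hone' : ∑ k ∈ Finset.Icc (j+1) (I-2),
        Acoef I a k / ((I:ℝ) - (k:ℝ)) *
          (∫ u in s..T, (if τ k ≤ u then κ u * (γ u - γ (τ k)) else 0))
        = ∑ k ∈ Finset.Icc (j+1) (I-2),
            Acoef I a k / ((I:ℝ) - (k:ℝ)) *
              (∫ u in (max t (τ k))..T, κ u * (γ u - γ (τ k))) :=
      Finset.sum_congr rfl fun k hk => by rw [hone k hk]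
    rw [h1, hone']
    unfold Yproc GamP
    rw [← hs]
    by_cases hj2 : j ≤ I - 2
    · rw [if_pos hj2, hC, if_pos hj2]
      have hsc : ∑ k ∈ Finset.Icc (j+1) (I-2),
          Acoef I a k / ((I:ℝ) - (k:ℝ)) * (∫ u in (max t (τ k))..T, κ u * (γ u - γ (τ k)))
          = ∑ k ∈ Finset.Icc (j+1) (I-2),
              Acoef I a k * (∫ u in (max t (τ k))..T, κ u * (γ u - γ (τ k)))
                / ((I:ℝ) - (k:ℝ)) :=
        Finset.sum_congr rfl fun k _ => by ring
      rw [hsc]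
      ring
    · rw [if_neg hj2, hC, if_neg hj2, Finset.Icc_eq_empty (by omega), Finset.sum_empty,
        add_zero]
  -- identities for the left part [t, s]
  have hF0 : ∀ u, u ≤ τ j →
      κ u * (muDrift κ γ I a τ u / κ u + γ u * a j + θ0 j - thetaEq κ γ I a τ θ0 j u)
        = 0 := by
    intro u hu
    unfold thetaEq
    rw [if_pos hu]
    ring
  have hIntF2 : IntervalIntegrable (fun u => κ u * (muDrift κ γ I a τ u / κ u
      + γ u * a j + θ0 j - thetaEq κ γ I a τ θ0 j u)) volume s T := by
    rw [intervalIntegrable_iff_integrableOn_Ioc_of_le hsT]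
    have hN' := hIntN
    rw [intervalIntegrable_iff_integrableOn_Ioc_of_le hsT] at hN'
    exact hN'.congr_fun
      (fun u hu => (hPW u (le_trans hτjs hu.1.le) hu.2).symm) measurableSet_Ioc
  have hIntF1 : IntervalIntegrable (fun u => κ u * (muDrift κ γ I a τ u / κ u
      + γ u * a j + θ0 j - thetaEq κ γ I a τ θ0 j u)) volume t s := by
    by_cases htc : t ≤ τ j
    · have hst : s = τ j := max_eq_right htc
      rw [intervalIntegrable_iff_integrableOn_Ioc_of_le hts]
      exact integrableOn_zero.congr_fun
        (fun u hu => (hF0 u (hst ▸ hu.2)).symm) measurableSet_Ioc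
    · have hst : s = t := max_eq_left (not_le.1 htc).le
      rw [hst]
  rw [← intervalIntegral.integral_add_adjacent_intervals hIntF1 hIntF2]
  have hz1 : (∫ u in t..s, κ u * (muDrift κ γ I a τ u / κ u
      + γ u * a j + θ0 j - thetaEq κ γ I a τ θ0 j u)) = 0 := by
    by_cases htc : t ≤ τ j
    · have hst : s = τ j := max_eq_right htc
      rw [intervalIntegral.integral_congr (g := fun _ => (0:ℝ)) ?_]
      · simp
      · intro u hu
        rw [Set.uIcc_of_le hts] at hu
        exact hF0 u (hst ▸ hu.2)
    · have hst : s = t := max_eq_left (not_le.1 htc).le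
      rw [hst, intervalIntegral.integral_same]
  rw [hz1, zero_add]
  rw [intervalIntegral.integral_congr (g := N) ?_]
  · exact hIN
  · intro u hu
    rw [Set.uIcc_of_le hsT] at hu
    exact hPW u (le_trans hτjs hu.1) hu.2
end

section
/- Let 1 ≤ j ≤ I−2 and 0 ≤ m ≤ I−j−2, and let t lie in the open interval (τ(j+m), τ(j+m+1)) if m ≤ I−j−3, or in (τ(I−2), T) if m = I−j−2. Then the function s ↦ Y(j)_s / (∫_s^T κ(u) du) is differentiable at t with derivative ( κ(t) / (∫_t^T κ(u) du)² ) · ( ( ((I−j+1)/(I−j))·A(j) + Σ_{k=j+1}^{j+m} A(k)/(I−k) )·F(t) + Σ_{l=j+m+1}^{I−2} Γ(l)_{τ(l)}/(I−l) ). -/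
open MeasureTheory

/-- `F(t) = ∫_t^T κ(u)(γ(u) − γ(t)) du`. -/
noncomputable def Ffun (T : ℝ) (κ γ : ℝ → ℝ) (t : ℝ) : ℝ :=
  ∫ u in t..T, κ u * (γ u - γ t)

/-- for `1 ≤ j ≤ I−2`, `0 ≤ m ≤ I−j−2`, and `t` in the open interval
`(τ(j+m), τ(j+m+1))` when `m ≤ I−j−3`, or in `(τ(I−2), T)` when `m = I−j−2`,
the map `s ↦ Y(j)_s / ∫_s^T κ(u) du` is differentiable at `t` with derivative
`(κ(t)/(∫_t^T κ)²)·((((I−j+1)/(I−j))·A(j) + Σ_{k=j+1}^{j+m} A(k)/(I−k))·F(t)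
  + Σ_{l=j+m+1}^{I−2} Γ(l)_{τ(l)}/(I−l))`. -/
theorem stmt12 (T : ℝ) (κ γ : ℝ → ℝ) (hT : 0 < T)
    (hκcont : ContinuousOn κ (Set.Icc 0 T))
    (hκpos : ∀ t ∈ Set.Icc (0 : ℝ) T, 0 < κ t)
    (hγcont : ContinuousOn γ (Set.Icc 0 T))
    (hγmono : StrictMonoOn γ (Set.Icc 0 T))
    (hγ0 : γ 0 = 0) (hγT : γ T = 1)
    (I : ℕ) (hI : 3 ≤ I) (a : ℕ → ℝ) (τ : ℕ → ℝ)
    (hτ0 : τ 0 = 0) (hτmono : ∀ j k : ℕ, j ≤ k → k ≤ I → τ j ≤ τ k)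
    (hτlast : τ (I - 1) = τ I) (hτT : τ (I - 1) < T)
    :
    ∀ j m : ℕ, 1 ≤ j → j ≤ I - 2 → m ≤ I - j - 2 →
      ∀ t : ℝ,
        ((m ≤ I - j - 3 ∧ t ∈ Set.Ioo (τ (j + m)) (τ (j + m + 1))) ∨
          (m = I - j - 2 ∧ t ∈ Set.Ioo (τ (I - 2)) T)) →
        HasDerivAt (fun s => Yproc T κ γ I a τ j s / ∫ u in s..T, κ u)
          (κ t / (∫ u in t..T, κ u) ^ 2 *
            ((((I : ℝ) - (j : ℝ) + 1) / ((I : ℝ) - (j : ℝ)) * Acoef I a j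
                + ∑ k ∈ Finset.Icc (j + 1) (j + m), Acoef I a k / ((I : ℝ) - (k : ℝ)))
                  * Ffun T κ γ t
              + ∑ l ∈ Finset.Icc (j + m + 1) (I - 2),
                  GamP T κ γ I a τ l (τ l) / ((I : ℝ) - (l : ℝ)))) t := by
  intro j m hj1 hjI hm t ht
  -- arithmetic facts
  have hjmI2 : j + m ≤ I - 2 := by omega
  have hjmI : j + m ≤ I := by omega
  -- neighborhood U and basic position facts
  obtain ⟨U, hUopen, htU, hUlow, hUhigh, ht0, htT⟩ :
      ∃ U : Set ℝ, IsOpen U ∧ t ∈ U ∧ (∀ s ∈ U, τ (j + m) < s) ∧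
        (∀ s ∈ U, ∀ l ∈ Finset.Ioc (j + m) (I - 2), s ≤ τ l) ∧ 0 < t ∧ t < T := by
    rcases ht with ⟨hm3, ht⟩ | ⟨hm2, ht⟩
    · refine ⟨Set.Ioo (τ (j + m)) (τ (j + m + 1)), isOpen_Ioo, ht, fun s hs => hs.1,
        fun s hs l hl => ?_, ?_, ?_⟩
      · have hl' := Finset.mem_Ioc.mp hl
        exact le_trans hs.2.le (hτmono _ _ (by omega) (by omega))
      · have : (0:ℝ) ≤ τ (j + m) := hτ0 ▸ hτmono 0 (j + m) (by omega) hjmI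
        linarith [ht.1]
      · have : τ (j + m + 1) ≤ τ (I - 1) := hτmono _ _ (by omega) (by omega)
        linarith [ht.2]
    · have hjm : j + m = I - 2 := by omega
      refine ⟨Set.Ioo (τ (I - 2)) T, isOpen_Ioo, ht, fun s hs => hjm ▸ hs.1,
        fun s hs l hl => ?_, ?_, ht.2⟩
      · have hl' := Finset.mem_Ioc.mp hl
        omega
      · have : (0:ℝ) ≤ τ (I - 2) := hτ0 ▸ hτmono 0 (I - 2) (by omega) (by omega)
        linarith [ht.1]
  have htmemnhds : Set.Icc (0:ℝ) T ∈ nhds t := Icc_mem_nhds ht0 htT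
  have hsub : Set.uIcc t T ⊆ Set.Icc 0 T := by
    rw [Set.uIcc_of_le htT.le]; exact Set.Icc_subset_Icc ht0.le le_rfl
  -- continuity / integrability
  have hκat : ContinuousAt κ t := hκcont.continuousAt htmemnhds
  have hγat : ContinuousAt γ t := hγcont.continuousAt htmemnhds
  have hKint : IntervalIntegrable κ volume t T := (hκcont.mono hsub).intervalIntegrable
  have hEcont : ∀ p : ℝ, ContinuousOn (fun u => κ u * (γ u - γ p)) (Set.Icc 0 T) :=
    fun p => hκcont.mul (hγcont.sub continuousOn_const)
  have hEint : ∀ p : ℝ, IntervalIntegrable (fun u => κ u * (γ u - γ p)) volume t T :=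
    fun p => ((hEcont p).mono hsub).intervalIntegrable
  have htIoo : t ∈ Set.Ioo (0:ℝ) T := ⟨ht0, htT⟩
  -- derivatives of the building blocks
  have hEderiv : ∀ p : ℝ, HasDerivAt (fun s => ∫ u in s..T, κ u * (γ u - γ p))
      (-(κ t * (γ t - γ p))) t := by
    intro p
    exact intervalIntegral.integral_hasDerivAt_left (hEint p)
      (((hEcont p).mono Set.Ioo_subset_Icc_self).stronglyMeasurableAtFilter isOpen_Ioo t htIoo)
      (hκat.mul (hγat.sub continuousAt_const))
  have hKderiv : HasDerivAt (fun s => ∫ u in s..T, κ u) (-(κ t)) t :=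
    intervalIntegral.integral_hasDerivAt_left hKint
      ((hκcont.mono Set.Ioo_subset_Icc_self).stronglyMeasurableAtFilter isOpen_Ioo t htIoo) hκat
  have hKpos : 0 < ∫ u in t..T, κ u :=
    intervalIntegral.intervalIntegral_pos_of_pos_on hKint
      (fun x hx => hκpos x ⟨le_of_lt (lt_trans ht0 hx.1), hx.2.le⟩) htT
  have hKne : (∫ u in t..T, κ u) ≠ 0 := ne_of_gt hKpos
  -- key identity
  have hkey : ∀ p : ℝ, (∫ u in t..T, κ u * (γ u - γ p)) =
      Ffun T κ γ t + (γ t - γ p) * ∫ u in t..T, κ u := by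
    intro p
    rw [Ffun, ← intervalIntegral.integral_const_mul,
      ← intervalIntegral.integral_add (hEint t) (hKint.const_mul _)]
    apply intervalIntegral.integral_congr
    intro u _
    ring
  -- notation
  set c : ℝ := ((I : ℝ) - (j : ℝ) + 1) / ((I : ℝ) - (j : ℝ)) with hc
  set C : ℝ := ∑ l ∈ Finset.Ioc (j + m) (I - 2), GamP T κ γ I a τ l (τ l) / ((I : ℝ) - (l : ℝ))
    with hC
  set g : ℝ → ℝ := fun s =>
    c * (Acoef I a j * ∫ u in s..T, κ u * (γ u - γ (τ j)))
      + (∑ k ∈ Finset.Ioc j (j + m),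
          (Acoef I a k * ∫ u in s..T, κ u * (γ u - γ (τ k))) / ((I : ℝ) - (k : ℝ)))
      + C with hg
  -- Yproc agrees with g near t
  have heq : (fun s => Yproc T κ γ I a τ j s / ∫ u in s..T, κ u)
      =ᶠ[nhds t] (fun s => g s / ∫ u in s..T, κ u) := by
    filter_upwards [hUopen.mem_nhds htU] with s hs
    congr 1
    have hmax : ∀ k, k ≤ j + m → GamP T κ γ I a τ k s
        = Acoef I a k * ∫ u in s..T, κ u * (γ u - γ (τ k)) := by
      intro k hk
      have : τ k ≤ s := le_of_lt (lt_of_le_of_lt (hτmono k (j + m) hk hjmI) (hUlow s hs))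
      rw [GamP, max_eq_left this]
    have hconst : ∀ l ∈ Finset.Ioc (j + m) (I - 2),
        GamP T κ γ I a τ l s = GamP T κ γ I a τ l (τ l) := by
      intro l hl
      rw [GamP, GamP, max_eq_right (hUhigh s hs l hl), max_self]
    rw [Yproc, if_pos hjI, hg]
    rw [Finset.Icc_add_one_left_eq_Ioc, ← Finset.sum_Ioc_consecutive _ (Nat.le_add_right j m) hjmI2,
      hmax j (Nat.le_add_right j m), ← add_assoc, ← hc]
    congr 1
    · congr 1
      apply Finset.sum_congr rfl
      intro k hk
      rw [hmax k (Finset.mem_Ioc.mp hk).2]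
    · apply Finset.sum_congr rfl
      intro l hl
      rw [hconst l hl]
  -- derivative of g / K
  have hgderiv : HasDerivAt g
      (c * (Acoef I a j * -(κ t * (γ t - γ (τ j))))
        + ∑ k ∈ Finset.Ioc j (j + m),
            (Acoef I a k * -(κ t * (γ t - γ (τ k)))) / ((I : ℝ) - (k : ℝ))) t := by
    apply HasDerivAt.add_const
    exact (((hEderiv (τ j)).const_mul _).const_mul c).add
      (HasDerivAt.fun_sum fun k _ => ((hEderiv (τ k)).const_mul _).div_const _)
  have hdiv := hgderiv.div hKderiv hKne
  have hmain := hdiv.congr_of_eventuallyEq heq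
  convert hmain using 1
  · rfl
  · rfl
  simp only [hg]
  rw [Finset.Icc_add_one_left_eq_Ioc, Finset.Icc_add_one_left_eq_Ioc]
  simp only [hkey]
  set Kt : ℝ := ∫ u in t..T, κ u
  set Ft : ℝ := Ffun T κ γ t
  have expand :
      (∑ k ∈ Finset.Ioc j (j + m), (Acoef I a k * -(κ t * (γ t - γ (τ k)))) / ((I : ℝ) - (k : ℝ))) * Kt
        + (∑ k ∈ Finset.Ioc j (j + m), (Acoef I a k * (Ft + (γ t - γ (τ k)) * Kt)) / ((I : ℝ) - (k : ℝ))) * κ t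
      = (∑ k ∈ Finset.Ioc j (j + m), Acoef I a k / ((I : ℝ) - (k : ℝ))) * Ft * κ t := by
    rw [Finset.sum_mul, Finset.sum_mul, Finset.sum_mul, Finset.sum_mul, ← Finset.sum_add_distrib]
    apply Finset.sum_congr rfl
    intro k _
    ring
  set s1 : ℝ := ∑ k ∈ Finset.Ioc j (j + m),
    (Acoef I a k * -(κ t * (γ t - γ (τ k)))) / ((I : ℝ) - (k : ℝ)) with hs1
  set s2 : ℝ := ∑ k ∈ Finset.Ioc j (j + m),
    (Acoef I a k * (Ft + (γ t - γ (τ k)) * Kt)) / ((I : ℝ) - (k : ℝ)) with hs2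
  set s3 : ℝ := ∑ k ∈ Finset.Ioc j (j + m), Acoef I a k / ((I : ℝ) - (k : ℝ)) with hs3
  have hKt2 : Kt ^ 2 ≠ 0 := pow_ne_zero 2 hKne
  rw [div_mul_eq_mul_div, div_eq_div_iff hKt2 hKt2]
  linear_combination (-(Kt ^ 2)) * expand
end

section
/- Let λ > 0 and 1 ≤ j ≤ I−2. Assume τ(j) > 0, |Y(k)_t| ≤ λ for every t ∈ [0,T] and every j+1 ≤ k ≤ I−2, |Y(j)_{τ(j)}| = λ, and A(j) ≥ 0. Then: (i) Y(j)_t = λ for every t ∈ [0, τ(j)]; and (ii) if moreover for each 1 ≤ i ≤ j−1 there exists t ∈ [0, τ(j)] such that |((I−j+1)/(I−j))·( a(i) − (a(i) + a_Σ^{≥j+1})/(I−j+1) )·F(t) + Σ_{k=j+1}^{I−2} (A(k)/(I−k))·F(max(t, τ(k)))| ≤ λ, then a(j) ≥ a(i) for every 1 ≤ i ≤ j−1. The symmetric statement holds when A(j) ≤ 0, with conclusions Y(j)_t = −λ on [0, τ(j)] and a(j) ≤ a(i). -/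
open MeasureTheory

/-- partial sum `S(k) = Σ_{m=k}^{I-2} A(m) F(τ(m))/(I−m)` -/
noncomputable def Sfun (T : ℝ) (κ γ : ℝ → ℝ) (I : ℕ) (a : ℕ → ℝ) (τ : ℕ → ℝ) (k : ℕ) : ℝ :=
  ∑ m ∈ Finset.Icc k (I - 2), Acoef I a m * Ffun T κ γ (τ m) / ((I : ℝ) - (m : ℝ))

section Basic

variable {T : ℝ} {κ γ : ℝ → ℝ}

lemma integ19 (hκcont : ContinuousOn κ (Set.Icc 0 T))
    (hγcont : ContinuousOn γ (Set.Icc 0 T)) {s t : ℝ} (hs0 : 0 ≤ s) (hst : s ≤ t)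
    (htT : t ≤ T) (c : ℝ) :
    IntervalIntegrable (fun u => κ u * (γ u - c)) volume s t := by
  apply ContinuousOn.intervalIntegrable
  have hsub : Set.uIcc s t ⊆ Set.Icc 0 T := by
    rw [Set.uIcc_of_le hst]
    exact Set.Icc_subset_Icc hs0 htT
  exact (hκcont.mono hsub).mul ((hγcont.mono hsub).sub continuousOn_const)

lemma Ffun_nonneg (hκcont : ContinuousOn κ (Set.Icc 0 T))
    (hκpos : ∀ t ∈ Set.Icc (0 : ℝ) T, 0 < κ t)
    (hγmono : StrictMonoOn γ (Set.Icc 0 T)) {s : ℝ} (hs0 : 0 ≤ s) (hsT : s ≤ T) :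
    0 ≤ Ffun T κ γ s := by
  apply intervalIntegral.integral_nonneg hsT
  intro u hu
  have huI : u ∈ Set.Icc (0:ℝ) T := ⟨hs0.trans hu.1, hu.2⟩
  have : γ s ≤ γ u := hγmono.monotoneOn ⟨hs0, hsT⟩ huI hu.1
  exact mul_nonneg (hκpos u huI).le (by linarith)

lemma Ffun_pos (hκcont : ContinuousOn κ (Set.Icc 0 T))
    (hκpos : ∀ t ∈ Set.Icc (0 : ℝ) T, 0 < κ t)
    (hγcont : ContinuousOn γ (Set.Icc 0 T))
    (hγmono : StrictMonoOn γ (Set.Icc 0 T)) {s : ℝ} (hs0 : 0 ≤ s) (hsT : s < T) :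
    0 < Ffun T κ γ s := by
  apply intervalIntegral.intervalIntegral_pos_of_pos_on
    (integ19 hκcont hγcont hs0 hsT.le le_rfl _) _ hsT
  intro u hu
  have huI : u ∈ Set.Icc (0:ℝ) T := ⟨hs0.trans hu.1.le, hu.2.le⟩
  have : γ s < γ u := hγmono ⟨hs0, hsT.le⟩ huI hu.1
  exact mul_pos (hκpos u huI) (by linarith)

lemma Ffun_anti (hκcont : ContinuousOn κ (Set.Icc 0 T))
    (hκpos : ∀ t ∈ Set.Icc (0 : ℝ) T, 0 < κ t)
    (hγcont : ContinuousOn γ (Set.Icc 0 T))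
    (hγmono : StrictMonoOn γ (Set.Icc 0 T)) {s t : ℝ} (hs0 : 0 ≤ s) (hst : s ≤ t)
    (htT : t ≤ T) : Ffun T κ γ t ≤ Ffun T κ γ s := by
  have ht0 : 0 ≤ t := hs0.trans hst
  have hsplit : Ffun T κ γ s
      = (∫ u in s..t, κ u * (γ u - γ s)) + ∫ u in t..T, κ u * (γ u - γ s) := by
    rw [Ffun, ← intervalIntegral.integral_add_adjacent_intervals
      (integ19 hκcont hγcont hs0 hst htT (γ s))
      (integ19 hκcont hγcont ht0 htT le_rfl (γ s))]
  have h1 : 0 ≤ ∫ u in s..t, κ u * (γ u - γ s) := by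
    apply intervalIntegral.integral_nonneg hst
    intro u hu
    have huI : u ∈ Set.Icc (0:ℝ) T := ⟨hs0.trans hu.1, hu.2.trans htT⟩
    have : γ s ≤ γ u := hγmono.monotoneOn ⟨hs0, (hst.trans htT)⟩ huI hu.1
    exact mul_nonneg (hκpos u huI).le (by linarith)
  have h2 : Ffun T κ γ t ≤ ∫ u in t..T, κ u * (γ u - γ s) := by
    rw [Ffun]
    apply intervalIntegral.integral_mono_on htT
      (integ19 hκcont hγcont ht0 htT le_rfl (γ t))
      (integ19 hκcont hγcont ht0 htT le_rfl (γ s))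
    intro u hu
    have huI : u ∈ Set.Icc (0:ℝ) T := ⟨ht0.trans hu.1, hu.2⟩
    have : γ s ≤ γ t := hγmono.monotoneOn ⟨hs0, hst.trans htT⟩ ⟨ht0, htT⟩ hst
    have hκ := (hκpos u huI).le
    nlinarith
  linarith [hsplit ▸ (by linarith : Ffun T κ γ t ≤ (∫ u in s..t, κ u * (γ u - γ s)) + ∫ u in t..T, κ u * (γ u - γ s))]

end Basic

lemma aSig_neg (I : ℕ) (a : ℕ → ℝ) (j : ℕ) : aSig I (fun k => -a k) j = -aSig I a j := by
  simp [aSig]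

lemma Acoef_neg (I : ℕ) (a : ℕ → ℝ) (j : ℕ) :
    Acoef I (fun k => -a k) j = -Acoef I a j := by
  unfold Acoef
  rw [aSig_neg, aSig_neg]
  split <;> ring

lemma GamP_neg (T : ℝ) (κ γ : ℝ → ℝ) (I : ℕ) (a : ℕ → ℝ) (τ : ℕ → ℝ) (j : ℕ) (t : ℝ) :
    GamP T κ γ I (fun k => -a k) τ j t = -GamP T κ γ I a τ j t := by
  unfold GamP
  rw [Acoef_neg]
  ring

lemma Yproc_neg (T : ℝ) (κ γ : ℝ → ℝ) (I : ℕ) (a : ℕ → ℝ) (τ : ℕ → ℝ) (j : ℕ) (t : ℝ) :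
    Yproc T κ γ I (fun k => -a k) τ j t = -Yproc T κ γ I a τ j t := by
  unfold Yproc
  split
  · simp only [GamP_neg, neg_div, Finset.sum_neg_distrib]
    ring
  · rw [GamP_neg]

lemma stmt19_aux (T : ℝ) (κ γ : ℝ → ℝ)
    (hκcont : ContinuousOn κ (Set.Icc 0 T))
    (hκpos : ∀ t ∈ Set.Icc (0 : ℝ) T, 0 < κ t)
    (hγcont : ContinuousOn γ (Set.Icc 0 T))
    (hγmono : StrictMonoOn γ (Set.Icc 0 T))
    (I : ℕ) (hI : 3 ≤ I) (a : ℕ → ℝ) (τ : ℕ → ℝ)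
    (hτ0 : τ 0 = 0) (hτmono : ∀ j k : ℕ, j ≤ k → k ≤ I → τ j ≤ τ k)
    (hτT : τ (I - 1) < T)
    (lam : ℝ) (hlam : 0 < lam) (j : ℕ) (hj2 : j ≤ I - 2)
    (hYb : ∀ t ∈ Set.Icc (0 : ℝ) T, ∀ k : ℕ, j + 1 ≤ k → k ≤ I - 2 →
      |Yproc T κ γ I a τ k t| ≤ lam)
    (hYeq : |Yproc T κ γ I a τ j (τ j)| = lam)
    (hA : 0 ≤ Acoef I a j) :
    (∀ t ∈ Set.Icc 0 (τ j), Yproc T κ γ I a τ j t = lam) ∧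
    ((∀ i : ℕ, 1 ≤ i → i ≤ j - 1 → ∃ t ∈ Set.Icc 0 (τ j),
        |((I : ℝ) - (j : ℝ) + 1) / ((I : ℝ) - (j : ℝ))
            * (a i - (a i + aSig I a (j + 1)) / ((I : ℝ) - (j : ℝ) + 1)) * Ffun T κ γ t
          + ∑ k ∈ Finset.Icc (j + 1) (I - 2),
              Acoef I a k / ((I : ℝ) - (k : ℝ)) * Ffun T κ γ (max t (τ k))| ≤ lam) →
      ∀ i : ℕ, 1 ≤ i → i ≤ j - 1 → a i ≤ a j) := by
  -- basic facts about τ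
  have hτk0 : ∀ k, k ≤ I → 0 ≤ τ k := fun k hk => hτ0 ▸ hτmono 0 k (Nat.zero_le _) hk
  have hτkT : ∀ k, k ≤ I - 1 → τ k ≤ T :=
    fun k hk => le_trans (hτmono k (I-1) hk (by omega)) hτT.le
  have hcast : ∀ k : ℕ, k ≤ I - 2 → (k : ℝ) + 2 ≤ (I : ℝ) := by
    intro k hk
    have : k + 2 ≤ I := by omega
    exact_mod_cast this
  -- the key formula for Yproc on the stopped region
  have key : ∀ k, k ≤ I - 2 → ∀ t, t ≤ τ k →
      Yproc T κ γ I a τ k t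
        = ((I : ℝ) - (k : ℝ) + 1) / ((I : ℝ) - (k : ℝ)) * (Acoef I a k * Ffun T κ γ (τ k))
          + Sfun T κ γ I a τ (k+1) := by
    intro k hk t htk
    have hGam : ∀ m, t ≤ τ m → GamP T κ γ I a τ m t = Acoef I a m * Ffun T κ γ (τ m) := by
      intro m hm
      unfold GamP Ffun
      rw [max_eq_right hm]
    unfold Yproc
    rw [if_pos hk, hGam k htk]
    congr 1
    unfold Sfun
    apply Finset.sum_congr rfl
    intro m hm
    simp only [Finset.mem_Icc] at hm
    rw [hGam m (htk.trans (hτmono k m (by omega) (by omega)))]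
  -- recurrence for S
  have hSrec : ∀ k, k ≤ I - 2 → Sfun T κ γ I a τ k
      = Acoef I a k * Ffun T κ γ (τ k) / ((I : ℝ) - (k : ℝ)) + Sfun T κ γ I a τ (k+1) := by
    intro k hk
    unfold Sfun
    rw [show Finset.Icc k (I-2) = insert k (Finset.Icc (k+1) (I-2)) by
        rw [Finset.Icc_add_one_left_eq_Ioc, Finset.Ioc_insert_left hk],
      Finset.sum_insert (by simp)]
  have hSend : Sfun T κ γ I a τ (I-1) = 0 := by
    unfold Sfun
    rw [Finset.Icc_eq_empty (by omega), Finset.sum_empty]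
  -- value at τ j
  have hFj0 : 0 ≤ Ffun T κ γ (τ j) :=
    Ffun_nonneg hκcont hκpos hγmono (hτk0 j (by omega)) (hτkT j (by omega))
  have hdj : (0:ℝ) < (I : ℝ) - (j : ℝ) := by have := hcast j hj2; linarith
  have hcj : (0:ℝ) ≤ ((I : ℝ) - (j : ℝ) + 1) / ((I : ℝ) - (j : ℝ)) :=
    div_nonneg (by linarith) hdj.le
  have hkeyj := key j hj2 (τ j) le_rfl
  -- Y(j)(τ j) = lam (rule out -lam)
  have hYjval : Yproc T κ γ I a τ j (τ j) = lam := by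
    rcases (abs_eq hlam.le).1 hYeq with h | h
    · exact h
    · exfalso
      have hS1 : Sfun T κ γ I a τ (j+1) ≤ -lam := by
        have hnn : 0 ≤ ((I : ℝ) - (j : ℝ) + 1) / ((I : ℝ) - (j : ℝ))
            * (Acoef I a j * Ffun T κ γ (τ j)) := mul_nonneg hcj (mul_nonneg hA hFj0)
        rw [hkeyj] at h
        linarith
      have hall : ∀ k, j + 1 ≤ k → k ≤ I - 1 → Sfun T κ γ I a τ k ≤ -lam := by
        intro k hk1
        induction k, hk1 using Nat.le_induction with
        | base => intro _; exact hS1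
        | succ k hk ih =>
          intro hk2
          have hkI : k ≤ I - 2 := by omega
          have ihk : Sfun T κ γ I a τ k ≤ -lam := ih (by omega)
          have hτmem : τ k ∈ Set.Icc (0:ℝ) T :=
            ⟨hτk0 k (by omega), hτkT k (by omega)⟩
          have hY := hYb (τ k) hτmem k hk hkI
          rw [key k hkI (τ k) le_rfl] at hY
          have hrec := hSrec k hkI
          have hdk : (0:ℝ) < (I : ℝ) - (k : ℝ) := by have := hcast k hkI; linarith
          set Sk := Sfun T κ γ I a τ k
          set Sk1 := Sfun T κ γ I a τ (k+1)
          set P := Acoef I a k * Ffun T κ γ (τ k) with hP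
          have hPval : P = ((I : ℝ) - (k : ℝ)) * (Sk - Sk1) := by
            have : Sk - Sk1 = P / ((I : ℝ) - (k : ℝ)) := by linarith [hrec]
            rw [this]
            field_simp
          have hX : ((I : ℝ) - (k : ℝ) + 1) / ((I : ℝ) - (k : ℝ)) * P
              = ((I : ℝ) - (k : ℝ) + 1) * (Sk - Sk1) := by
            rw [hPval]; field_simp
          rw [hX] at hY
          have hlow := (abs_le.1 hY).1
          nlinarith [mul_le_mul_of_nonneg_left ihk (show (0:ℝ) ≤ (I : ℝ) - (k : ℝ) + 1 by linarith)]
      have := hall (I-1) (by omega) le_rfl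
      rw [hSend] at this
      linarith
  constructor
  · -- part (i)
    intro t ht
    rw [key j hj2 t ht.2, ← hkeyj, hYjval]
  · -- part (ii)
    intro hmax i hi1 hi2
    obtain ⟨t, ht, hE⟩ := hmax i hi1 hi2
    have ht0 : 0 ≤ t := ht.1
    have htτ : t ≤ τ j := ht.2
    have hτjT : τ j < T := lt_of_le_of_lt (hτmono j (I-1) (by omega) (by omega)) hτT
    -- rewrite the sum in hE as S(j+1)
    have hsum : (∑ k ∈ Finset.Icc (j + 1) (I - 2),
          Acoef I a k / ((I : ℝ) - (k : ℝ)) * Ffun T κ γ (max t (τ k)))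
        = Sfun T κ γ I a τ (j+1) := by
      unfold Sfun
      apply Finset.sum_congr rfl
      intro m hm
      simp only [Finset.mem_Icc] at hm
      rw [max_eq_right (htτ.trans (hτmono j m (by omega) (by omega)))]
      ring
    rw [hsum] at hE
    rw [hkeyj] at hYjval
    -- coefficient algebra
    have hAj : Acoef I a j = a j - (a j + aSig I a (j+1)) / ((I : ℝ) - (j : ℝ) + 1) := by
      unfold Acoef
      rw [if_neg (by omega)]
      congr 2
      unfold aSig
      rw [show Finset.Icc j I = insert j (Finset.Icc (j+1) I) by
          rw [Finset.Icc_add_one_left_eq_Ioc, Finset.Ioc_insert_left (by omega)],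
        Finset.sum_insert (by simp)]
    set c := ((I : ℝ) - (j : ℝ) + 1) / ((I : ℝ) - (j : ℝ)) with hc
    set B := a i - (a i + aSig I a (j + 1)) / ((I : ℝ) - (j : ℝ) + 1) with hB
    have hBA : c * B - c * Acoef I a j = a i - a j := by
      rw [hAj, hB, hc]
      field_simp
      ring
    set Ft := Ffun T κ γ t
    set Fj := Ffun T κ γ (τ j)
    have hFt_pos : 0 < Ft := Ffun_pos hκcont hκpos hγcont hγmono ht0 (lt_of_le_of_lt htτ hτjT)
    have hFmono : Fj ≤ Ft := Ffun_anti hκcont hκpos hγcont hγmono ht0 htτ hτjT.le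
    have hup := (abs_le.1 hE).2
    -- hE : |c * B * Ft + S(j+1)| ≤ lam, hYjval : c * (A j * Fj) + S(j+1) = lam
    -- c*B*Ft = (a i - a j)*Ft + c*Aj*Ft
    have hcb : c * B = (a i - a j) + c * Acoef I a j := by linarith [hBA]
    have hrw : c * B * Ft = (a i - a j) * Ft + c * Acoef I a j * Ft := by
      rw [hcb]; ring
    rw [hrw] at hup
    have h1 : 0 ≤ c * Acoef I a j * (Ft - Fj) :=
      mul_nonneg (mul_nonneg hcj hA) (by linarith)
    -- hup : (a i - a j)*Ft + c*Aj*Ft + S(j+1) ≤ lam = c*Aj*Fj + S(j+1)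
    have h2 : (a i - a j) * Ft ≤ 0 := by nlinarith [hYjval]
    have h3 := (mul_le_mul_iff_of_pos_right hFt_pos).mp (by linarith : (a i - a j) * Ft ≤ 0 * Ft)
    linarith
/-- let `λ > 0` and `1 ≤ j ≤ I−2`, with `τ(j) > 0`, `|Y(k)_t| ≤ λ` for all
`t ∈ [0,T]` and `j+1 ≤ k ≤ I−2`, and `|Y(j)_{τ(j)}| = λ`.  If `A(j) ≥ 0` then
`Y(j) ≡ λ` on `[0,τ(j)]`, and (under the stated maximality-type hypothesis) `a(j) ≥ a(i)`
for all `1 ≤ i ≤ j−1`; symmetrically if `A(j) ≤ 0`. -/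
theorem stmt19 (T : ℝ) (κ γ : ℝ → ℝ) (hT : 0 < T)
    (hκcont : ContinuousOn κ (Set.Icc 0 T))
    (hκpos : ∀ t ∈ Set.Icc (0 : ℝ) T, 0 < κ t)
    (hγcont : ContinuousOn γ (Set.Icc 0 T))
    (hγmono : StrictMonoOn γ (Set.Icc 0 T))
    (hγ0 : γ 0 = 0) (hγT : γ T = 1)
    (I : ℕ) (hI : 3 ≤ I) (a : ℕ → ℝ) (τ : ℕ → ℝ)
    (hτ0 : τ 0 = 0) (hτmono : ∀ j k : ℕ, j ≤ k → k ≤ I → τ j ≤ τ k)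
    (hτlast : τ (I - 1) = τ I) (hτT : τ (I - 1) < T)
    (lam : ℝ) (hlam : 0 < lam) (j : ℕ) (hj1 : 1 ≤ j) (hj2 : j ≤ I - 2)
    (hτj : 0 < τ j)
    (hYb : ∀ t ∈ Set.Icc (0 : ℝ) T, ∀ k : ℕ, j + 1 ≤ k → k ≤ I - 2 →
      |Yproc T κ γ I a τ k t| ≤ lam)
    (hYeq : |Yproc T κ γ I a τ j (τ j)| = lam) :
    (0 ≤ Acoef I a j →
      (∀ t ∈ Set.Icc 0 (τ j), Yproc T κ γ I a τ j t = lam) ∧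
      ((∀ i : ℕ, 1 ≤ i → i ≤ j - 1 → ∃ t ∈ Set.Icc 0 (τ j),
          |((I : ℝ) - (j : ℝ) + 1) / ((I : ℝ) - (j : ℝ))
              * (a i - (a i + aSig I a (j + 1)) / ((I : ℝ) - (j : ℝ) + 1)) * Ffun T κ γ t
            + ∑ k ∈ Finset.Icc (j + 1) (I - 2),
                Acoef I a k / ((I : ℝ) - (k : ℝ)) * Ffun T κ γ (max t (τ k))| ≤ lam) →
        ∀ i : ℕ, 1 ≤ i → i ≤ j - 1 → a i ≤ a j)) ∧
    (Acoef I a j ≤ 0 →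
      (∀ t ∈ Set.Icc 0 (τ j), Yproc T κ γ I a τ j t = -lam) ∧
      ((∀ i : ℕ, 1 ≤ i → i ≤ j - 1 → ∃ t ∈ Set.Icc 0 (τ j),
          |((I : ℝ) - (j : ℝ) + 1) / ((I : ℝ) - (j : ℝ))
              * (a i - (a i + aSig I a (j + 1)) / ((I : ℝ) - (j : ℝ) + 1)) * Ffun T κ γ t
            + ∑ k ∈ Finset.Icc (j + 1) (I - 2),
                Acoef I a k / ((I : ℝ) - (k : ℝ)) * Ffun T κ γ (max t (τ k))| ≤ lam) →
        ∀ i : ℕ, 1 ≤ i → i ≤ j - 1 → a j ≤ a i)) := by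
  constructor
  · intro hA
    exact stmt19_aux T κ γ hκcont hκpos hγcont hγmono I hI a τ hτ0 hτmono hτT lam hlam
      j hj2 hYb hYeq hA
  · intro hA
    have hYb' : ∀ t ∈ Set.Icc (0:ℝ) T, ∀ k : ℕ, j + 1 ≤ k → k ≤ I - 2 →
        |Yproc T κ γ I (fun m => -a m) τ k t| ≤ lam := by
      intro t ht k hk1 hk2
      rw [Yproc_neg, abs_neg]
      exact hYb t ht k hk1 hk2
    have hYeq' : |Yproc T κ γ I (fun m => -a m) τ j (τ j)| = lam := by
      rw [Yproc_neg, abs_neg]; exact hYeq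
    have hA' : 0 ≤ Acoef I (fun m => -a m) j := by rw [Acoef_neg]; linarith
    obtain ⟨h1, h2⟩ := stmt19_aux T κ γ hκcont hκpos hγcont hγmono I hI (fun m => -a m) τ
      hτ0 hτmono hτT lam hlam j hj2 hYb' hYeq' hA'
    constructor
    · intro t ht
      have := h1 t ht
      rw [Yproc_neg] at this
      linarith
    · intro hmax i hi1 hi2
      have hmax' : ∀ i : ℕ, 1 ≤ i → i ≤ j - 1 → ∃ t ∈ Set.Icc 0 (τ j),
          |((I : ℝ) - (j : ℝ) + 1) / ((I : ℝ) - (j : ℝ))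
              * ((fun m => -a m) i - ((fun m => -a m) i + aSig I (fun m => -a m) (j + 1))
                  / ((I : ℝ) - (j : ℝ) + 1)) * Ffun T κ γ t
            + ∑ k ∈ Finset.Icc (j + 1) (I - 2),
                Acoef I (fun m => -a m) k / ((I : ℝ) - (k : ℝ))
                  * Ffun T κ γ (max t (τ k))| ≤ lam := by
        intro i' hi1' hi2'
        obtain ⟨t, ht, hE⟩ := hmax i' hi1' hi2'
        refine ⟨t, ht, ?_⟩
        have hexpr : ((I : ℝ) - (j : ℝ) + 1) / ((I : ℝ) - (j : ℝ))
              * ((fun m => -a m) i' - ((fun m => -a m) i' + aSig I (fun m => -a m) (j + 1))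
                  / ((I : ℝ) - (j : ℝ) + 1)) * Ffun T κ γ t
            + ∑ k ∈ Finset.Icc (j + 1) (I - 2),
                Acoef I (fun m => -a m) k / ((I : ℝ) - (k : ℝ))
                  * Ffun T κ γ (max t (τ k))
            = -(((I : ℝ) - (j : ℝ) + 1) / ((I : ℝ) - (j : ℝ))
              * (a i' - (a i' + aSig I a (j + 1)) / ((I : ℝ) - (j : ℝ) + 1)) * Ffun T κ γ t
            + ∑ k ∈ Finset.Icc (j + 1) (I - 2),
                Acoef I a k / ((I : ℝ) - (k : ℝ)) * Ffun T κ γ (max t (τ k))) := by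
          simp only [Acoef_neg, aSig_neg, neg_div, neg_mul, Finset.sum_neg_distrib]
          ring
        rw [hexpr, abs_neg]
        exact hE
      have := h2 hmax' i hi1 hi2
      linarith
end
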